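/- arXiv:0910.4016 — 4 statements merged into one kernel-verified Lean document; each statement's English description precedes it below -/
import Mathlib

section
/- Let f : M → M be a C¹ map of a compact Riemannian manifold M with Lebesgue (volume) measure Leb. Suppose f is eventually volume expanding, i.e., there exists λ > 0 such that for Lebesgue almost every x ∈ M, sup_{n ≥ 1} (1/n) log |det Df^n(x)| > λ. Define h(x) = min{n > 0 : |det Df^n(x)| ≥ e^{λn}} and Γ_n = {x ∈ M : h(x) ≥ n}, and assume Leb(Γ_n) ≤ C·n^{−α} for some constants C > 0 and α > 2 (so that h ∈ L^p(Leb) for some p > 3). Then for Lebesgue almost every x ∈ M there exist C_x > 0 and a sequence σ_n → ∞ such that |det Df^n(y)| > C_x · σ_n for every n ≥ 1 and every y ∈ f^{−n}(x). -/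
open MeasureTheory Set Filter Function Real ENNReal

/-- `|det Df^n(x)|`: the absolute value of the Jacobian determinant of the `n`-th
iterate of `f` at `x`. -/
noncomputable def absDetIter {d : ℕ}
    (f : EuclideanSpace ℝ (Fin d) → EuclideanSpace ℝ (Fin d)) (n : ℕ)
    (x : EuclideanSpace ℝ (Fin d)) : ℝ :=
  |(fderiv ℝ (f^[n]) x).det|

/-- `h(x) = min {n > 0 : |det Df^n(x)| ≥ e^{λ n}}`, with value `∞` if no such `n` exists. -/
noncomputable def firstExpTime {d : ℕ}
    (f : EuclideanSpace ℝ (Fin d) → EuclideanSpace ℝ (Fin d)) (lam : ℝ)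
    (x : EuclideanSpace ℝ (Fin d)) : ℕ∞ :=
  sInf {N : ℕ∞ | ∃ m : ℕ, (m : ℕ∞) = N ∧ 0 < m ∧ Real.exp (lam * m) ≤ absDetIter f m x}

/-- `Γ_n = {x ∈ M : h(x) ≥ n}`. -/
noncomputable def GammaSet {d : ℕ} (M : Set (EuclideanSpace ℝ (Fin d)))
    (f : EuclideanSpace ℝ (Fin d) → EuclideanSpace ℝ (Fin d)) (lam : ℝ) (n : ℕ) :
    Set (EuclideanSpace ℝ (Fin d)) :=
  {x ∈ M | (n : ℕ∞) ≤ firstExpTime f lam x}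

section Aux

variable {d : ℕ} {f : EuclideanSpace ℝ (Fin d) → EuclideanSpace ℝ (Fin d)}

lemma contDiff_iter (hf : ContDiff ℝ 1 f) (n : ℕ) : ContDiff ℝ 1 (f^[n]) := by
  induction n with
  | zero => simpa using contDiff_id
  | succ n ih => rw [Function.iterate_succ']; exact hf.comp ih

lemma absDetIter_nonneg (f : EuclideanSpace ℝ (Fin d) → EuclideanSpace ℝ (Fin d))
    (n : ℕ) (x : EuclideanSpace ℝ (Fin d)) : 0 ≤ absDetIter f n x := abs_nonneg _

lemma absDetIter_zero (f : EuclideanSpace ℝ (Fin d) → EuclideanSpace ℝ (Fin d))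
    (x : EuclideanSpace ℝ (Fin d)) : absDetIter f 0 x = 1 := by
  simp only [absDetIter, Function.iterate_zero, fderiv_id]
  rw [show (ContinuousLinearMap.id ℝ (EuclideanSpace ℝ (Fin d))).det = 1 from by
    simp [ContinuousLinearMap.det]]
  exact abs_one

lemma absDetIter_add (hf : ContDiff ℝ 1 f) (m k : ℕ) (y : EuclideanSpace ℝ (Fin d)) :
    absDetIter f (k + m) y = absDetIter f k (f^[m] y) * absDetIter f m y := by
  have h1 : DifferentiableAt ℝ (f^[k]) (f^[m] y) :=
    ((contDiff_iter hf k).differentiable one_ne_zero) _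
  have h2 : DifferentiableAt ℝ (f^[m]) y := ((contDiff_iter hf m).differentiable one_ne_zero) _
  unfold absDetIter
  rw [Function.iterate_add f k m, fderiv_comp y h1 h2]
  rw [show ((fderiv ℝ (f^[k]) (f^[m] y)).comp (fderiv ℝ (f^[m]) y)).det
      = (fderiv ℝ (f^[k]) (f^[m] y)).det * (fderiv ℝ (f^[m]) y).det from by
    simp only [ContinuousLinearMap.det, ContinuousLinearMap.coe_comp, LinearMap.det_comp]
    exact LinearMap.det_comp _ _]
  exact abs_mul _ _

lemma one_le_firstExpTime (f : EuclideanSpace ℝ (Fin d) → EuclideanSpace ℝ (Fin d))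
    (lam : ℝ) (x : EuclideanSpace ℝ (Fin d)) : 1 ≤ firstExpTime f lam x := by
  apply le_sInf
  rintro N ⟨m, rfl, hm, -⟩
  exact_mod_cast hm

lemma exists_of_firstExpTime_le (f : EuclideanSpace ℝ (Fin d) → EuclideanSpace ℝ (Fin d))
    (lam : ℝ) (y : EuclideanSpace ℝ (Fin d)) {n : ℕ} (h : firstExpTime f lam y ≤ (n : ℕ∞)) :
    ∃ m : ℕ, 1 ≤ m ∧ m ≤ n ∧ Real.exp (lam * m) ≤ absDetIter f m y := by
  by_contra hc
  push_neg at hc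
  have hlow : ((n + 1 : ℕ) : ℕ∞) ≤ firstExpTime f lam y := by
    apply le_sInf
    rintro N ⟨m, rfl, hm, hme⟩
    have hmn : ¬ m ≤ n := fun hmn => absurd hme (not_le.2 (hc m hm hmn))
    exact_mod_cast by omega
  have := hlow.trans h
  have : (n + 1 : ℕ) ≤ n := by exact_mod_cast this
  omega

lemma decomp {M : Set (EuclideanSpace ℝ (Fin d))} (hfM : MapsTo f M M)
    (hf : ContDiff ℝ 1 f) (lam : ℝ) :
    ∀ n : ℕ, 1 ≤ n → ∀ y ∈ M, ∃ r : ℕ, r ≤ n ∧ ∃ z ∈ M, f^[r] z = f^[n] y ∧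
      ((r : ℕ∞) + 1 ≤ firstExpTime f lam z) ∧
      Real.exp (lam * ((n - r : ℕ) : ℝ)) * absDetIter f r z ≤ absDetIter f n y := by
  intro n
  induction n using Nat.strong_induction_on with
  | _ n IH =>
  intro hn y hy
  by_cases hft : firstExpTime f lam y ≤ (n : ℕ∞)
  · obtain ⟨m, hm1, hmn, hme⟩ := exists_of_firstExpTime_le f lam y hft
    rcases eq_or_lt_of_le hmn with heq | hlt
    · subst heq
      refine ⟨0, Nat.zero_le _, f^[m] y, hfM.iterate m hy, rfl, ?_, ?_⟩
      · simpa using one_le_firstExpTime f lam (f^[m] y)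
      · simpa [absDetIter_zero] using hme
    · set n' := n - m with hn'
      have hn'1 : 1 ≤ n' := by omega
      have hlt' : n' < n := by omega
      obtain ⟨r, hrn', z, hzM, hz, hΓ, hineq⟩ := IH n' hlt' hn'1 (f^[m] y) (hfM.iterate m hy)
      refine ⟨r, by omega, z, hzM, ?_, hΓ, ?_⟩
      · rw [hz, ← Function.iterate_add_apply]
        congr 1
        omega
      · have hchain : absDetIter f n y = absDetIter f n' (f^[m] y) * absDetIter f m y := by
          have hnm : n = n' + m := by omega
          rw [hnm, absDetIter_add hf m n' y]
        have e1 : Real.exp (lam * ((n - r : ℕ) : ℝ))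
            = Real.exp (lam * ((n' - r : ℕ) : ℝ)) * Real.exp (lam * (m : ℝ)) := by
          rw [← Real.exp_add]
          congr 1
          have h1 : (n - r : ℕ) = (n' - r : ℕ) + m := by omega
          rw [h1]
          push_cast
          ring
        rw [hchain, e1]
        calc Real.exp (lam * ((n' - r : ℕ) : ℝ)) * Real.exp (lam * (m : ℝ)) * absDetIter f r z
            = (Real.exp (lam * ((n' - r : ℕ) : ℝ)) * absDetIter f r z)
              * Real.exp (lam * (m : ℝ)) := by ring
          _ ≤ absDetIter f n' (f^[m] y) * absDetIter f m y :=
            mul_le_mul hineq hme (Real.exp_pos _).le (absDetIter_nonneg f n' _)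
  · refine ⟨n, le_rfl, y, hy, rfl, ?_, ?_⟩
    · exact Order.add_one_le_of_lt (not_le.1 hft)
    · simp [Nat.sub_self]

end Aux

/-- For an eventually volume expanding map with polynomial decay (exponent `α > 2`) of
`Leb (Γ_n)`, Lebesgue almost every point has uniform backward volume contraction on all
of its pre-orbits, with rates `σ_n → ∞`. -/
theorem backward_contraction_of_eventual_expansion {d : ℕ}
    (M : Set (EuclideanSpace ℝ (Fin d))) (hM : IsCompact M)
    (f : EuclideanSpace ℝ (Fin d) → EuclideanSpace ℝ (Fin d))
    (hf : ContDiff ℝ 1 f) (hfM : MapsTo f M M)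
    (lam : ℝ) (hlam : 0 < lam)
    (h_expanding : ∀ᵐ x ∂(volume.restrict M),
      ∃ n : ℕ, 1 ≤ n ∧ lam < (1 / n) * Real.log (absDetIter f n x))
    (C α : ℝ) (hC : 0 < C) (hα : 2 < α)
    (hGamma : ∀ n : ℕ, 1 ≤ n →
      volume (GammaSet M f lam n) ≤ ENNReal.ofReal (C * (n : ℝ) ^ (-α))) :
    ∀ᵐ x ∂(volume.restrict M), ∃ Cx : ℝ, 0 < Cx ∧ ∃ σ : ℕ → ℝ,
      Tendsto σ atTop atTop ∧
      ∀ n : ℕ, 1 ≤ n → ∀ y ∈ M, f^[n] y = x → Cx * σ n < absDetIter f n y := by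
  classical
  have hdiff : ∀ r : ℕ, Differentiable ℝ (f^[r]) :=
    fun r => (contDiff_iter hf r).differentiable one_ne_zero
  have hcont : ∀ r : ℕ, Continuous fun z => absDetIter f r z := fun r =>
    continuous_abs.comp (ContinuousLinearMap.continuous_det.comp
      ((contDiff_iter hf r).continuous_fderiv one_ne_zero))
  have hMmeas : MeasurableSet M := hM.isClosed.measurableSet
  -- measurability of the Gamma sets
  have hGeq : ∀ k : ℕ, GammaSet M f lam k
      = M ∩ ⋂ m ∈ Finset.Ico 1 k, {x | absDetIter f m x < Real.exp (lam * m)} := by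
    intro k
    ext x
    simp only [GammaSet, mem_setOf_eq, mem_inter_iff, mem_iInter, Finset.mem_Ico]
    constructor
    · rintro ⟨hxM, hle⟩
      refine ⟨hxM, fun m hm => ?_⟩
      by_contra hcon
      push_neg at hcon
      have : firstExpTime f lam x ≤ (m : ℕ∞) :=
        sInf_le ⟨m, rfl, by omega, hcon⟩
      have := this.trans_lt (lt_of_lt_of_le (by exact_mod_cast hm.2) hle)
      exact lt_irrefl _ this
    · rintro ⟨hxM, hall⟩
      refine ⟨hxM, le_sInf ?_⟩
      rintro N ⟨m, rfl, hm, hme⟩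
      by_contra hcon
      push_neg at hcon
      have hmk : m < k := by exact_mod_cast hcon
      exact absurd hme (not_le.2 (hall m ⟨hm, hmk⟩))
  have hGmeas : ∀ k : ℕ, MeasurableSet (GammaSet M f lam k) := by
    intro k
    rw [hGeq k]
    refine hMmeas.inter (MeasurableSet.biInter (Finset.Ico 1 k).countable_toSet
      fun m _ => ?_)
    exact (isOpen_lt (hcont m) continuous_const).measurableSet
  -- the bad sets
  set q : ℝ≥0∞ := ENNReal.ofReal (Real.exp (-lam)) with hqdef
  have hq1 : q < 1 := ENNReal.ofReal_lt_one.2 (Real.exp_lt_one_iff.2 (by linarith))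
  set A : ℕ → ℕ → ℕ → Set (EuclideanSpace ℝ (Fin d)) := fun k n r =>
    {z ∈ GammaSet M f lam (r + 1) |
      absDetIter f r z ≤ (k : ℝ) * Real.exp (-lam) ^ (n - r)} with hAdef
  set Bad : ℕ → ℕ → Set (EuclideanSpace ℝ (Fin d)) := fun k n =>
    ⋃ r ∈ Finset.range (n + 1), f^[r] '' A k n r with hBdef
  have hAmeas : ∀ k n r, MeasurableSet (A k n r) := by
    intro k n r
    exact (hGmeas (r + 1)).inter
      ((isClosed_le (hcont r) continuous_const).measurableSet)
  set Gr : ℕ → ℝ≥0∞ := fun r => ENNReal.ofReal (C * ((r + 1 : ℕ) : ℝ) ^ (-α)) with hGrdef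
  -- measure bound for each bad set
  have hBadLe : ∀ k n : ℕ, volume (Bad k n)
      ≤ ∑ r ∈ Finset.range (n + 1), ENNReal.ofReal (k : ℝ) * (q ^ (n - r) * Gr r) := by
    intro k n
    refine le_trans (measure_biUnion_finset_le _ _) (Finset.sum_le_sum fun r hr => ?_)
    have himg : volume (f^[r] '' A k n r)
        ≤ ∫⁻ z in A k n r, ENNReal.ofReal |(fderiv ℝ (f^[r]) z).det| := by
      exact addHaar_image_le_lintegral_abs_det_fderiv volume (hAmeas k n r)
        (fun z _ => ((hdiff r z).hasFDerivAt).hasFDerivWithinAt)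
    have hint : ∫⁻ z in A k n r, ENNReal.ofReal |(fderiv ℝ (f^[r]) z).det|
        ≤ ENNReal.ofReal ((k : ℝ) * Real.exp (-lam) ^ (n - r)) * volume (A k n r) := by
      rw [← setLIntegral_const (A k n r)]
      refine setLIntegral_mono measurable_const fun z hz => ?_
      exact ENNReal.ofReal_le_ofReal hz.2
    have hvolA : volume (A k n r) ≤ Gr r := by
      refine le_trans (measure_mono fun z hz => hz.1) ?_
      exact hGamma (r + 1) (by omega)
    have hofr : ENNReal.ofReal ((k : ℝ) * Real.exp (-lam) ^ (n - r))
        = ENNReal.ofReal (k : ℝ) * q ^ (n - r) := by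
      rw [ENNReal.ofReal_mul (by positivity), ENNReal.ofReal_pow (Real.exp_pos _).le]
    calc volume (f^[r] '' A k n r)
        ≤ ENNReal.ofReal ((k : ℝ) * Real.exp (-lam) ^ (n - r)) * volume (A k n r) :=
          himg.trans hint
      _ ≤ ENNReal.ofReal ((k : ℝ) * Real.exp (-lam) ^ (n - r)) * Gr r :=
          mul_le_mul_right hvolA _
      _ = ENNReal.ofReal (k : ℝ) * (q ^ (n - r) * Gr r) := by rw [hofr, mul_assoc]
  -- summability of the bad sets
  have hGrsum : ∑' r, Gr r ≠ ⊤ := by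
    have hsummable : Summable fun r : ℕ => C * ((r + 1 : ℕ) : ℝ) ^ (-α) := by
      apply Summable.mul_left
      have h0 : Summable fun n : ℕ => (n : ℝ) ^ (-α) :=
        Real.summable_nat_rpow.2 (by linarith)
      exact (summable_nat_add_iff 1).2 h0
    rw [← ENNReal.ofReal_tsum_of_nonneg (fun r => by positivity) hsummable]
    exact ENNReal.ofReal_ne_top
  have hsum : ∀ k : ℕ, ∑' n, volume (Bad k n) ≠ ⊤ := by
    intro k
    set F : ℕ → ℕ → ℝ≥0∞ := fun n r => if r ≤ n then q ^ (n - r) * Gr r else 0 with hFdef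
    have hFsum : ∀ n : ℕ, ∑ r ∈ Finset.range (n + 1), q ^ (n - r) * Gr r = ∑' r, F n r := by
      intro n
      have h1 : ∑' r, F n r = ∑ r ∈ Finset.range (n + 1), F n r :=
        tsum_eq_sum (fun r hr =>
          if_neg (fun h => hr (Finset.mem_range.2 (Nat.lt_succ_of_le h))))
      rw [h1]
      exact Finset.sum_congr rfl fun r hr =>
        (if_pos (Nat.lt_succ_iff.1 (Finset.mem_range.1 hr))).symm
    have hinner : ∀ r : ℕ, ∑' n, F n r = (1 - q)⁻¹ * Gr r := by
      intro r
      have hinj : Function.Injective (fun j : ℕ => j + r) := add_left_injective r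
      have hsupp : Function.support (fun n => F n r) ⊆ Set.range (fun j : ℕ => j + r) := by
        intro n hn
        have hrn : r ≤ n := by
          by_contra hc
          exact hn (if_neg hc)
        exact ⟨n - r, by show n - r + r = n; omega⟩
      calc ∑' n, F n r = ∑' j, F (j + r) r := (hinj.tsum_eq hsupp).symm
        _ = ∑' j, q ^ j * Gr r := by
            refine tsum_congr fun j => ?_
            rw [hFdef]
            simp [Nat.le_add_left, Nat.add_sub_cancel]
        _ = (∑' j : ℕ, q ^ j) * Gr r := ENNReal.tsum_mul_right
        _ = (1 - q)⁻¹ * Gr r := by rw [ENNReal.tsum_geometric]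
    have hcalc : ∑' n, ∑ r ∈ Finset.range (n + 1), ENNReal.ofReal (k : ℝ) * (q ^ (n - r) * Gr r)
        = ENNReal.ofReal (k : ℝ) * ((1 - q)⁻¹ * ∑' r, Gr r) := by
      calc ∑' n, ∑ r ∈ Finset.range (n + 1), ENNReal.ofReal (k : ℝ) * (q ^ (n - r) * Gr r)
          = ∑' n, ENNReal.ofReal (k : ℝ) * ∑ r ∈ Finset.range (n + 1), q ^ (n - r) * Gr r := by
            exact tsum_congr fun n => (Finset.mul_sum _ _ _).symm
        _ = ENNReal.ofReal (k : ℝ) * ∑' n, ∑ r ∈ Finset.range (n + 1), q ^ (n - r) * Gr r :=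
            ENNReal.tsum_mul_left
        _ = ENNReal.ofReal (k : ℝ) * ∑' n, ∑' r, F n r := by
            rw [tsum_congr hFsum]
        _ = ENNReal.ofReal (k : ℝ) * ∑' r, ∑' n, F n r := by rw [ENNReal.tsum_comm]
        _ = ENNReal.ofReal (k : ℝ) * ∑' r, (1 - q)⁻¹ * Gr r := by rw [tsum_congr hinner]
        _ = ENNReal.ofReal (k : ℝ) * ((1 - q)⁻¹ * ∑' r, Gr r) := by rw [ENNReal.tsum_mul_left]
    have hfin : ENNReal.ofReal (k : ℝ) * ((1 - q)⁻¹ * ∑' r, Gr r) ≠ ⊤ := by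
      apply ENNReal.mul_ne_top ENNReal.ofReal_ne_top
      apply ENNReal.mul_ne_top _ hGrsum
      exact ENNReal.inv_ne_top.2 (ne_of_gt (tsub_pos_of_lt hq1))
    refine ne_top_of_le_ne_top (hcalc ▸ hfin) ?_
    exact ENNReal.tsum_le_tsum (fun n => hBadLe k n)
  -- Borel–Cantelli
  have hae : ∀ᵐ x ∂(volume : Measure (EuclideanSpace ℝ (Fin d))),
      ∀ k : ℕ, ∀ᶠ n in atTop, x ∉ Bad k n := by
    rw [ae_all_iff]
    intro k
    have hlim : volume (limsup (Bad k) atTop) = 0 := measure_limsup_atTop_eq_zero (hsum k)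
    have hsub : {x | ¬ ∀ᶠ n in atTop, x ∉ Bad k n} ⊆ limsup (Bad k) atTop := by
      intro x hx
      rw [mem_limsup_iff_frequently_mem]
      have hx' : ¬ ∀ᶠ n in atTop, x ∉ Bad k n := hx
      rw [Filter.not_eventually] at hx'
      exact hx'.mono fun n hn => not_not.1 hn
    exact measure_mono_null hsub hlim
  -- conclude
  filter_upwards [ae_restrict_of_ae hae] with x hx
  have key : ∀ k n : ℕ, 1 ≤ n → x ∉ Bad k n → ∀ y ∈ M, f^[n] y = x →
      (k : ℝ) < absDetIter f n y := by
    intro k n hn hxB y hyM hyx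
    by_contra hle
    push_neg at hle
    obtain ⟨r, hrn, z, hzM, hzx, hΓ, hexp⟩ := decomp hfM hf lam n hn y hyM
    apply hxB
    have hrmem : r ∈ Finset.range (n + 1) := Finset.mem_range.2 (by omega)
    have h1 : Real.exp (lam * ((n - r : ℕ) : ℝ)) * absDetIter f r z ≤ (k : ℝ) :=
      hexp.trans hle
    have h2 : Real.exp (-lam) ^ (n - r) = (Real.exp (lam * ((n - r : ℕ) : ℝ)))⁻¹ := by
      rw [← Real.exp_nat_mul, ← Real.exp_neg]
      congr 1
      ring
    have hbound : absDetIter f r z ≤ (k : ℝ) * Real.exp (-lam) ^ (n - r) := by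
      rw [h2]
      calc absDetIter f r z
          ≤ (k : ℝ) / Real.exp (lam * ((n - r : ℕ) : ℝ)) := by
            rw [le_div_iff₀ (Real.exp_pos _), mul_comm]
            exact h1
        _ = (k : ℝ) * (Real.exp (lam * ((n - r : ℕ) : ℝ)))⁻¹ := div_eq_mul_inv _ _
    have hzA : z ∈ A k n r := ⟨⟨hzM, by exact_mod_cast hΓ⟩, hbound⟩
    exact Set.mem_biUnion hrmem ⟨z, hzA, by rw [hzx, hyx]⟩
  have hx' : ∀ k : ℕ, ∃ N : ℕ, ∀ n ≥ N, x ∉ Bad k n := fun k => eventually_atTop.1 (hx k)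
  choose N hN using hx'
  refine ⟨1, one_pos, fun n => ((Nat.findGreatest (fun k => N k ≤ n) n : ℕ) : ℝ) - 1, ?_, ?_⟩
  · have h1 : Tendsto (fun n => Nat.findGreatest (fun k => N k ≤ n) n) atTop atTop := by
      rw [tendsto_atTop_atTop]
      intro b
      exact ⟨max b (N b), fun n hn => Nat.le_findGreatest (le_trans (le_max_left _ _) hn)
        (le_trans (le_max_right _ _) hn)⟩
    have h2 := (tendsto_natCast_atTop_atTop (R := ℝ)).comp h1
    simpa [sub_eq_add_neg, Function.comp] using tendsto_atTop_add_const_right atTop (-1 : ℝ) h2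
  · intro n hn y hyM hyx
    show (1 : ℝ) * (((Nat.findGreatest (fun k => N k ≤ n) n : ℕ) : ℝ) - 1) < absDetIter f n y
    set K := Nat.findGreatest (fun k => N k ≤ n) n with hK
    rcases Nat.eq_zero_or_pos K with h0 | hpos
    · rw [h0]
      have h1 : (1 : ℝ) * (((0 : ℕ) : ℝ) - 1) < 0 := by norm_num
      exact lt_of_lt_of_le h1 (absDetIter_nonneg f n y)
    · have hNK : N K ≤ n := Nat.findGreatest_of_ne_zero (P := fun k => N k ≤ n) hK.symm hpos.ne'
      have hKlt : (K : ℝ) < absDetIter f n y := key K n hn (hN K n hNK) y hyM hyx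
      have h1 : (1 : ℝ) * ((K : ℝ) - 1) < (K : ℝ) := by norm_num
      linarith
end

section
/- Let f : M → M be a measurable map of a compact Riemannian manifold M with Lebesgue measure Leb, with finite fibers (every set f^{−n}(x) is finite), and let (U_n)_{n≥1} be a concatenated collection of measurable subsets of M whose union has full Lebesgue measure. If ∑_{n≥1} ∑_{j=0}^{n−1} Leb(f^j(u^{−1}(n))) < ∞, then for Lebesgue almost every x ∈ M one has sup{ u(y) : y ∈ ⋃_{n≥1} U_n and x ∈ C(y) } < ∞, i.e., the lengths of the chains containing x are uniformly bounded. -/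
open MeasureTheory Set Filter Function

/-- For `x` in `⋃_{n ≥ 1} U_n`, `u x` is the least `n ≥ 1` with `x ∈ U n`
(and `u x = 0` if there is no such `n`). -/
noncomputable def chainIndex {E : Type*} (U : ℕ → Set E) (x : E) : ℕ :=
  sInf {n : ℕ | 1 ≤ n ∧ x ∈ U n}

/-- Lemma 1: if the "tower" over the chains of a concatenated collection has finite
Lebesgue measure, then almost every point belongs only to chains of uniformly bounded
length. Here `x ∈ C(y)` is expressed as `∃ j < u(y), f^[j] y = x`. -/
theorem bounded_chains_of_summable_tower {d : ℕ}
    (M : Set (EuclideanSpace ℝ (Fin d))) (hM : IsCompact M)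
    (f : EuclideanSpace ℝ (Fin d) → EuclideanSpace ℝ (Fin d))
    (hf : Measurable f) (hfM : MapsTo f M M)
    (hfib : ∀ (x : EuclideanSpace ℝ (Fin d)) (n : ℕ), (f^[n] ⁻¹' {x}).Finite)
    (U : ℕ → Set (EuclideanSpace ℝ (Fin d)))
    (hUM : ∀ n, 1 ≤ n → U n ⊆ M)
    (hUmeas : ∀ n, 1 ≤ n → MeasurableSet (U n))
    (hUfull : volume (M \ ⋃ n, ⋃ (_ : 1 ≤ n), U n) = 0)
    (hconc : ∀ n m, 1 ≤ n → 1 ≤ m → ∀ x, x ∈ U n → f^[n] x ∈ U m → x ∈ U (n + m))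
    (hsum : (∑' n : ℕ, ∑ j ∈ Finset.range n,
        volume (f^[j] '' {x | chainIndex U x = n})) < ⊤) :
    ∀ᵐ x ∂(volume.restrict M), ∃ N : ℕ, ∀ y : EuclideanSpace ℝ (Fin d),
      (∃ n, 1 ≤ n ∧ y ∈ U n) → (∃ j < chainIndex U y, f^[j] y = x) →
      chainIndex U y ≤ N := by
  set s : ℕ → Set (EuclideanSpace ℝ (Fin d)) :=
    fun n => ⋃ j ∈ Finset.range n, f^[j] '' {x | chainIndex U x = n} with hs
  have hsum' : ∑' n, volume (s n) ≠ ⊤ := by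
    refine ne_top_of_le_ne_top hsum.ne (ENNReal.tsum_le_tsum fun n => ?_)
    exact measure_biUnion_finset_le _ _
  have hlim : volume (limsup s atTop) = 0 := measure_limsup_atTop_eq_zero hsum'
  have hae : ∀ᵐ x ∂volume, x ∉ limsup s atTop := by
    rw [ae_iff]
    simpa using hlim
  filter_upwards [ae_restrict_of_ae hae] with x hx
  rw [mem_limsup_iff_frequently_mem, Filter.not_frequently] at hx
  obtain ⟨N, hN⟩ := eventually_atTop.mp hx
  refine ⟨N, fun y _ hmem => ?_⟩
  by_contra h
  push_neg at h
  obtain ⟨j, hj, hjx⟩ := hmem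
  exact hN _ h.le (mem_biUnion (Finset.mem_range.mpr hj) ⟨y, rfl, hjx⟩)
end

section
/- Let f : [−1,1] → [−1,1] be the quadratic map f(x) = 1 − a x² for a parameter 0 < a ≤ 2, let λ > 0, define h(x) = min{n > 0 : |(f^n)'(x)| ≥ e^{λn}} and Γ_n = {x ∈ [−1,1] : h(x) ≥ n}, and suppose there exist constants C, c > 0 such that Leb(Γ_n) ≤ C·e^{−cn} for every n ≥ 1. Then there exists β > 0 such that for Lebesgue almost every x ∈ [−1,1] there is C_x > 0 with |(f^n)'(y)| > C_x · e^{βn} for every n ≥ 1 and every y ∈ f^{−n}(x). -/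
open MeasureTheory Set Function Real

/-- `h(x) = min {n > 0 : |(f^n)'(x)| ≥ e^{λ n}}` for an interval map `f`, with value `∞`
if no such `n` exists. -/
noncomputable def firstExpTime1D (f : ℝ → ℝ) (lam : ℝ) (x : ℝ) : ℕ∞ :=
  sInf {N : ℕ∞ | ∃ m : ℕ, (m : ℕ∞) = N ∧ 0 < m ∧
    Real.exp (lam * m) ≤ |deriv (f^[m]) x|}

namespace QBC

noncomputable def D (a : ℝ) (f : ℝ → ℝ) (n : ℕ) (y : ℝ) : ℝ :=
  ∏ j ∈ Finset.range n, (-(2 * a) * f^[j] y)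

variable {a : ℝ} {f : ℝ → ℝ}

lemma hasDerivAt_f (hfdef : ∀ x, f x = 1 - a * x ^ 2) (x : ℝ) :
    HasDerivAt f (-(2 * a) * x) x := by
  have hf : f = fun x => 1 - a * x ^ 2 := funext hfdef
  rw [hf]
  have h := ((hasDerivAt_pow 2 x).const_mul a).const_sub 1
  refine h.congr_deriv ?_
  simp; ring

lemma contF (hfdef : ∀ x, f x = 1 - a * x ^ 2) : Continuous f := by
  have hf : f = fun x => 1 - a * x ^ 2 := funext hfdef
  rw [hf]; continuity

lemma hasDerivAt_iter (hfdef : ∀ x, f x = 1 - a * x ^ 2) (n : ℕ) (x : ℝ) :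
    HasDerivAt (f^[n]) (D a f n x) x := by
  induction n with
  | zero => simpa [D] using hasDerivAt_id x
  | succ n ih =>
    rw [Function.iterate_succ']
    have h1 : HasDerivAt f (-(2 * a) * (f^[n] x)) (f^[n] x) := hasDerivAt_f hfdef _
    have h2 := h1.comp x ih
    refine h2.congr_deriv ?_
    simp [D, Finset.prod_range_succ]; ring

lemma deriv_iter (hfdef : ∀ x, f x = 1 - a * x ^ 2) (n : ℕ) (x : ℝ) :
    deriv (f^[n]) x = D a f n x :=
  (hasDerivAt_iter hfdef n x).deriv

lemma contD (hfdef : ∀ x, f x = 1 - a * x ^ 2) (n : ℕ) : Continuous (D a f n) := by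
  refine continuous_finset_prod _ fun j _ => ?_
  exact continuous_const.mul ((contF hfdef).iterate j)

lemma contDeriv (hfdef : ∀ x, f x = 1 - a * x ^ 2) (n : ℕ) :
    Continuous fun z => deriv (f^[n]) z := by
  have : (fun z => deriv (f^[n]) z) = D a f n := funext fun z => deriv_iter hfdef n z
  rw [this]; exact contD hfdef n

lemma maps_Icc (ha0 : 0 < a) (ha2 : a ≤ 2) (hfdef : ∀ x, f x = 1 - a * x ^ 2)
    {x : ℝ} (hx : x ∈ Icc (-1 : ℝ) 1) : f x ∈ Icc (-1 : ℝ) 1 := by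
  obtain ⟨h1, h2⟩ := hx
  rw [hfdef]
  constructor
  · nlinarith [sq_nonneg x]
  · nlinarith [sq_nonneg x]

lemma iter_maps (ha0 : 0 < a) (ha2 : a ≤ 2) (hfdef : ∀ x, f x = 1 - a * x ^ 2)
    {x : ℝ} (hx : x ∈ Icc (-1 : ℝ) 1) (n : ℕ) : f^[n] x ∈ Icc (-1 : ℝ) 1 := by
  induction n with
  | zero => simpa using hx
  | succ n ih => rw [Function.iterate_succ_apply']; exact maps_Icc ha0 ha2 hfdef ih

lemma D_le (ha0 : 0 < a) (ha2 : a ≤ 2) (hfdef : ∀ x, f x = 1 - a * x ^ 2)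
    {x : ℝ} (hx : x ∈ Icc (-1 : ℝ) 1) (n : ℕ) : |D a f n x| ≤ 4 ^ n := by
  rw [D, Finset.abs_prod]
  calc ∏ j ∈ Finset.range n, |(-(2 * a) * f^[j] x)|
      ≤ ∏ _j ∈ Finset.range n, (4 : ℝ) := by
        refine Finset.prod_le_prod (fun j _ => abs_nonneg _) fun j _ => ?_
        have h1 := iter_maps ha0 ha2 hfdef hx j
        rw [abs_mul]
        have h2 : |f^[j] x| ≤ 1 := abs_le.2 ⟨h1.1, h1.2⟩
        have h3 : |(-(2 * a))| ≤ 4 := by rw [abs_neg, abs_of_pos (by linarith)]; linarith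
        calc |(-(2 * a))| * |f^[j] x| ≤ 4 * 1 :=
              mul_le_mul h3 h2 (abs_nonneg _) (by norm_num)
          _ = 4 := by norm_num
    _ = 4 ^ n := by rw [Finset.prod_const, Finset.card_range]

lemma D_add (p q : ℕ) (y : ℝ) :
    D a f (p + q) y = D a f p y * D a f q (f^[p] y) := by
  simp only [D, Finset.prod_range_add]
  congr 1
  refine Finset.prod_congr rfl fun j _ => ?_
  congr 1
  rw [← Function.iterate_add_apply, add_comm]

lemma image_meas_le (hfdef : ∀ x, f x = 1 - a * x ^ 2) {s : Set ℝ}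
    (hs : MeasurableSet s) (k : ℕ) {M : ℝ}
    (hb : ∀ z ∈ s, |D a f k z| ≤ M) :
    volume (f^[k] '' s) ≤ ENNReal.ofReal M * volume s := by
  have h1 : ∀ z ∈ s, HasFDerivWithinAt (f^[k])
      ((1 : ℝ →L[ℝ] ℝ).smulRight (D a f k z)) s z :=
    fun z _ => ((hasDerivAt_iter hfdef k z).hasFDerivAt).hasFDerivWithinAt
  calc volume (f^[k] '' s)
      ≤ ∫⁻ z in s, ENNReal.ofReal |((1 : ℝ →L[ℝ] ℝ).smulRight (D a f k z)).det| ∂volume :=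
        addHaar_image_le_lintegral_abs_det_fderiv volume hs h1
    _ ≤ ∫⁻ _ in s, ENNReal.ofReal M ∂volume := by
        refine setLIntegral_mono' hs fun z hz => ?_
        rw [ContinuousLinearMap.smulRight_one_eq_toSpanSingleton, ContinuousLinearMap.det_toSpanSingleton]
        exact ENNReal.ofReal_le_ofReal (hb z hz)
    _ = ENNReal.ofReal M * volume s := by rw [setLIntegral_const]

noncomputable def ladder (T : ℝ → Set ℕ) (f : ℝ → ℝ) (y : ℝ) : ℕ → ℕ
  | 0 => 0
  | k + 1 => ladder T f y k + sInf (T (f^[ladder T f y k] y))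

end QBC

open QBC

/-- Backward contraction for quadratic maps `f(x) = 1 - a x²` on `[-1,1]`: if
`Leb (Γ_n) ≤ C e^{-c n}` for the tail sets of `h(x) = min {n > 0 : |(f^n)'(x)| ≥ e^{λn}}`,
then there is `β > 0` such that for Lebesgue a.e. `x ∈ [-1,1]` there is `C_x > 0` with
`|(f^n)'(y)| > C_x e^{β n}` for every `n ≥ 1` and every `y ∈ f^{-n}(x)`. -/
theorem quadratic_backward_contraction (a : ℝ) (ha0 : 0 < a) (ha2 : a ≤ 2)
    (f : ℝ → ℝ) (hfdef : ∀ x, f x = 1 - a * x ^ 2)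
    (lam : ℝ) (hlam : 0 < lam)
    (C c : ℝ) (hC : 0 < C) (hc : 0 < c)
    (hGamma : ∀ n : ℕ, 1 ≤ n →
      volume {x ∈ Icc (-1 : ℝ) 1 | (n : ℕ∞) ≤ firstExpTime1D f lam x} ≤
        ENNReal.ofReal (C * Real.exp (-c * n))) :
    ∃ β : ℝ, 0 < β ∧ ∀ᵐ x ∂(volume.restrict (Icc (-1 : ℝ) 1)),
      ∃ Cx : ℝ, 0 < Cx ∧ ∀ n : ℕ, 1 ≤ n → ∀ y ∈ Icc (-1 : ℝ) 1, f^[n] y = x →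
        Cx * Real.exp (β * n) < |deriv (f^[n]) y| := by
  classical
  have hmβ : 0 < min lam c := lt_min hlam hc
  set mβ := min lam c with hmβdef
  set β := mβ / 2 with hβdef
  have hβ : 0 < β := by positivity
  set T : ℝ → Set ℕ :=
    fun z => {m' | 0 < m' ∧ Real.exp (lam * m') ≤ |deriv (f^[m']) z|} with hTdef
  -- the set of points in [-1,1] whose first expansion time is infinite
  set Hbad : Set ℝ := {z | z ∈ Icc (-1:ℝ) 1 ∧
      ∀ m' : ℕ, 0 < m' → |deriv (f^[m']) z| < Real.exp (lam * m')} with hHdef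
  have hHbadmeas : MeasurableSet Hbad := by
    have hE : Hbad = Icc (-1:ℝ) 1 ∩
        ⋂ m' : ℕ, {z | 0 < m' → |deriv (f^[m']) z| < Real.exp (lam * m')} := by
      ext z
      simp only [hHdef, Set.mem_setOf_eq, Set.mem_inter_iff, Set.mem_iInter]
    rw [hE]
    refine measurableSet_Icc.inter (MeasurableSet.iInter fun m' => ?_)
    by_cases h1 : 0 < m'
    · have : {z : ℝ | 0 < m' → |deriv (f^[m']) z| < Real.exp (lam * m')} =
          {z : ℝ | |deriv (f^[m']) z| < Real.exp (lam * m')} := by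
        ext z; simp [h1]
      rw [this]
      exact measurableSet_lt ((contDeriv hfdef m').abs.measurable) measurable_const
    · have : {z : ℝ | 0 < m' → |deriv (f^[m']) z| < Real.exp (lam * m')} = Set.univ := by
        ext z; simp [h1]
      rw [this]; exact MeasurableSet.univ
  have hHbadsub : ∀ n : ℕ, Hbad ⊆
      {x ∈ Icc (-1:ℝ) 1 | (n : ℕ∞) ≤ firstExpTime1D f lam x} := by
    intro n z hz
    refine ⟨hz.1, ?_⟩
    simp only [firstExpTime1D]
    refine le_sInf fun N hN => ?_
    obtain ⟨m', rfl, hm'pos, hm'le⟩ := hN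
    exact absurd hm'le (not_le.mpr (hz.2 m' hm'pos))
  have hHbad0 : volume Hbad = 0 := by
    have htend : Filter.Tendsto (fun n : ℕ => ENNReal.ofReal (C * Real.exp (-c * n)))
        Filter.atTop (nhds 0) := by
      have h2 : Filter.Tendsto (fun n : ℕ => Real.exp (-c) ^ n) Filter.atTop (nhds 0) :=
        tendsto_pow_atTop_nhds_zero_of_lt_one (exp_pos _).le
          (by rw [Real.exp_lt_one_iff]; linarith)
      have h3 := h2.const_mul C
      rw [mul_zero] at h3
      have h1 : Filter.Tendsto (fun n : ℕ => C * Real.exp (-c * n)) Filter.atTop (nhds 0) := by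
        refine h3.congr fun n => ?_
        rw [← Real.exp_nat_mul]
        congr 1
        ring
      have h4 := ENNReal.tendsto_ofReal h1
      simpa using h4
    refine le_antisymm ?_ zero_le
    refine ge_of_tendsto htend ?_
    filter_upwards [Filter.eventually_ge_atTop 1] with n hn
    exact le_trans (measure_mono (hHbadsub n)) (hGamma n hn)
  set E : Set ℝ := (⋃ j : ℕ, {f^[j+1] (0:ℝ)}) ∪ ⋃ k : ℕ, f^[k] '' Hbad with hEdef
  have hE0 : volume E = 0 := by
    rw [hEdef]
    refine measure_union_null ?_ ?_
    · exact (Set.countable_iUnion fun j => Set.countable_singleton _).measure_zero _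
    · refine measure_iUnion_null fun k => ?_
      have h1 := image_meas_le hfdef hHbadmeas k (M := 4 ^ k)
        (fun z hz => D_le ha0 ha2 hfdef hz.1 k)
      rw [hHbad0, mul_zero] at h1
      exact le_antisymm h1 zero_le
  set S : ℕ → ℕ → Set ℝ := fun n k => {z | z ∈ Icc (-1:ℝ) 1 ∧
      |deriv (f^[k]) z| ≤ Real.exp (β*n + lam*k - lam*n) ∧
      ∀ m' : ℕ, 0 < m' → Real.exp (lam * m') ≤ |deriv (f^[m']) z| → k+1 ≤ m'} with hSdef
  have hSmeas : ∀ n k : ℕ, MeasurableSet (S n k) := by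
    intro n k
    have hE : S n k = (Icc (-1:ℝ) 1 ∩
        {z | |deriv (f^[k]) z| ≤ Real.exp (β*n + lam*k - lam*n)}) ∩
        ⋂ m' : ℕ, {z | 0 < m' → Real.exp (lam * m') ≤ |deriv (f^[m']) z| → k+1 ≤ m'} := by
      ext z
      simp only [hSdef, Set.mem_setOf_eq, Set.mem_inter_iff, Set.mem_iInter]
      tauto
    rw [hE]
    refine (measurableSet_Icc.inter ?_).inter (MeasurableSet.iInter fun m' => ?_)
    · exact measurableSet_le ((contDeriv hfdef k).abs.measurable) measurable_const
    · by_cases h1 : 0 < m'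
      · by_cases h2 : k + 1 ≤ m'
        · have : {z : ℝ | 0 < m' → Real.exp (lam * m') ≤ |deriv (f^[m']) z| → k+1 ≤ m'} =
              Set.univ := by ext z; simp [h2]
          rw [this]; exact MeasurableSet.univ
        · have : {z : ℝ | 0 < m' → Real.exp (lam * m') ≤ |deriv (f^[m']) z| → k+1 ≤ m'} =
              {z : ℝ | |deriv (f^[m']) z| < Real.exp (lam * m')} := by
            ext z
            simp only [Set.mem_setOf_eq, h1, true_implies]
            constructor
            · intro h; by_contra hno; exact h2 (h (not_lt.mp hno))
            · intro h hle; exact absurd hle (not_le.mpr h)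
          rw [this]
          exact measurableSet_lt ((contDeriv hfdef m').abs.measurable) measurable_const
      · have : {z : ℝ | 0 < m' → Real.exp (lam * m') ≤ |deriv (f^[m']) z| → k+1 ≤ m'} =
            Set.univ := by ext z; simp [h1]
        rw [this]; exact MeasurableSet.univ
  have hSvol : ∀ n k : ℕ, volume (S n k) ≤ ENNReal.ofReal (C * Real.exp (-c * ((k:ℝ)+1))) := by
    intro n k
    have hsub : S n k ⊆ {x ∈ Icc (-1:ℝ) 1 | ((k+1 : ℕ) : ℕ∞) ≤ firstExpTime1D f lam x} := by
      intro z hz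
      refine ⟨hz.1, ?_⟩
      simp only [firstExpTime1D]
      refine le_sInf fun N hN => ?_
      obtain ⟨m', rfl, hm'pos, hm'le⟩ := hN
      exact_mod_cast Nat.cast_le.mpr (hz.2.2 m' hm'pos hm'le)
    refine le_trans (measure_mono hsub) (le_trans (hGamma (k+1) (by omega)) ?_)
    refine ENNReal.ofReal_le_ofReal ?_
    push_cast
    exact le_rfl
  
  have hSimg : ∀ n k : ℕ, k ≤ n →
      volume (f^[k] '' S n k) ≤ ENNReal.ofReal (C * Real.exp ((β - mβ) * n)) := by
    intro n k hkn
    have hM : (0:ℝ) ≤ Real.exp (β*n + lam*k - lam*n) := (exp_pos _).le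
    have h1 := image_meas_le hfdef (hSmeas n k) k
      (M := Real.exp (β*n + lam*k - lam*n))
      (fun z hz => by rw [← deriv_iter hfdef]; exact hz.2.1)
    refine le_trans h1 ?_
    calc ENNReal.ofReal (Real.exp (β*n + lam*k - lam*n)) * volume (S n k)
        ≤ ENNReal.ofReal (Real.exp (β*n + lam*k - lam*n)) *
          ENNReal.ofReal (C * Real.exp (-c * ((k:ℝ)+1))) :=
          mul_le_mul_right (hSvol n k) _
      _ ≤ ENNReal.ofReal (C * Real.exp ((β - mβ) * n)) := by
          rw [← ENNReal.ofReal_mul hM]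
          refine ENNReal.ofReal_le_ofReal ?_
          have hk : (k:ℝ) ≤ n := Nat.cast_le.mpr hkn
          have heq : Real.exp (β*n + lam*k - lam*n) * (C * Real.exp (-c*((k:ℝ)+1)))
              = C * Real.exp ((β*n + lam*k - lam*n) + (-c*((k:ℝ)+1))) := by
            rw [Real.exp_add]; ring
          rw [heq]
          refine mul_le_mul_of_nonneg_left (Real.exp_le_exp.mpr ?_) hC.le
          have h1' : mβ ≤ lam := min_le_left _ _
          have h2' : mβ ≤ c := min_le_right _ _
          nlinarith [mul_le_mul_of_nonneg_right h1' (sub_nonneg.mpr hk),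
            mul_le_mul_of_nonneg_right h2' (Nat.cast_nonneg k : (0:ℝ) ≤ (k:ℝ))]
  set Bad : ℕ → Set ℝ := fun n => {x | ∃ y, y ∈ Icc (-1:ℝ) 1 ∧ f^[n] y = x ∧
      |deriv (f^[n]) y| ≤ Real.exp (β * n)} with hBdef
  have hInc : ∀ n : ℕ, 1 ≤ n → ∀ x, x ∈ Bad n → x ∉ E →
      x ∈ ⋃ k ∈ Finset.range (n+1), f^[k] '' S n k := by
    intro n hn x hxB hxE
    obtain ⟨y, hy, hfy, hDy⟩ := hxB
    have horb : ∀ j : ℕ, f^[j] y ∈ Icc (-1:ℝ) 1 := fun j => iter_maps ha0 ha2 hfdef hy j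
    have hCT : ∀ j : ℕ, j ≤ n → (T (f^[j] y)).Nonempty := by
      intro j hj
      by_contra hcon
      apply hxE
      have hmem : f^[j] y ∈ Hbad := by
        refine ⟨horb j, fun m' hm' => ?_⟩
        by_contra hle
        exact hcon ⟨m', hm', not_lt.mp hle⟩
      refine Or.inr (mem_iUnion.mpr ⟨n - j, ⟨f^[j] y, hmem, ?_⟩⟩)
      rw [← Function.iterate_add_apply, Nat.sub_add_cancel hj]
      exact hfy
    set g := ladder T f y with hgdef
    have hg0 : g 0 = 0 := rfl
    have hstep : ∀ k, g (k+1) = g k + sInf (T (f^[g k] y)) := fun k => rfl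
    have key : ∀ k : ℕ, g k ≤ n →
        k ≤ g k ∧ Real.exp (lam * g k) ≤ |D a f (g k) y| := by
      intro k
      induction k with
      | zero =>
        intro _
        refine ⟨Nat.zero_le _, ?_⟩
        rw [hg0]
        simp [D]
      | succ k ih =>
        intro hle
        have hgk : g k ≤ n := le_trans (by rw [hstep]; exact Nat.le_add_right _ _) hle
        obtain ⟨hk1, hk2⟩ := ih hgk
        have hne : (T (f^[g k] y)).Nonempty := hCT (g k) hgk
        obtain ⟨hppos, hple⟩ := Nat.sInf_mem hne
        rw [deriv_iter hfdef] at hple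
        refine ⟨by rw [hstep]; omega, ?_⟩
        rw [hstep, D_add, abs_mul, Nat.cast_add, mul_add, Real.exp_add]
        exact mul_le_mul hk2 hple (exp_pos _).le (abs_nonneg _)
    set K := Nat.findGreatest (fun k => g k ≤ n) n with hKdef
    have hK1 : g K ≤ n :=
      Nat.findGreatest_spec (P := fun k => g k ≤ n) (Nat.zero_le n)
        (show g 0 ≤ n by rw [hg0]; omega)
    have hK2 : n < g (K+1) := by
      by_cases hc1 : K + 1 ≤ n
      · have h := Nat.findGreatest_is_greatest
          (show Nat.findGreatest (fun k => g k ≤ n) n < K+1 by omega) hc1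
        omega
      · have hKn : K ≤ n := Nat.findGreatest_le n
        have hKeq : K = n := by omega
        have h1 := (key K hK1).1
        have hne := hCT (g K) hK1
        have hppos : 0 < sInf (T (f^[g K] y)) := (Nat.sInf_mem hne).1
        have h5 := hstep K
        omega
    set k0 := n - g K with hk0def
    have hkn : k0 ≤ n := Nat.sub_le _ _
    have hgKk : g K + k0 = n := by omega
    set z := f^[g K] y with hzdef
    have hfz : f^[k0] z = x := by
      rw [hzdef, ← Function.iterate_add_apply]
      rw [show k0 + g K = n by omega]
      exact hfy
    have hzI : z ∈ Icc (-1:ℝ) 1 := horb _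
    have hkey := key K hK1
    have hsplit : D a f n y = D a f (g K) y * D a f k0 z := by
      rw [← hgKk, D_add]
    have hgKcast : (g K : ℝ) = (n:ℝ) - (k0:ℝ) := by
      have h := hgKk
      have : ((g K : ℕ) : ℝ) + ((k0 : ℕ) : ℝ) = ((n : ℕ) : ℝ) := by exact_mod_cast congrArg (Nat.cast : ℕ → ℝ) h
      linarith
    have hDz : |D a f k0 z| ≤ Real.exp (β*n + lam*k0 - lam*n) := by
      have h1 : Real.exp (lam * g K) * |D a f k0 z| ≤ Real.exp (β * n) := by
        calc Real.exp (lam * g K) * |D a f k0 z|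
            ≤ |D a f (g K) y| * |D a f k0 z| :=
              mul_le_mul_of_nonneg_right hkey.2 (abs_nonneg _)
          _ = |D a f n y| := by rw [hsplit, abs_mul]
          _ ≤ Real.exp (β * n) := by rw [← deriv_iter hfdef]; exact hDy
      have h2 : |D a f k0 z| ≤ Real.exp (β * n) / Real.exp (lam * g K) := by
        rw [le_div_iff₀ (exp_pos _)]
        linarith [h1]
      rw [← Real.exp_sub] at h2
      refine le_trans h2 (le_of_eq ?_)
      congr 1
      rw [hgKcast]
      ring
    have hsI : k0 < sInf (T z) := by
      have h5 := hstep K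
      rw [← hzdef] at h5
      omega
    have hTz : ∀ m' : ℕ, 0 < m' → Real.exp (lam * m') ≤ |deriv (f^[m']) z| → k0 + 1 ≤ m' := by
      intro m' h1 h2
      have hm : m' ∈ T z := ⟨h1, h2⟩
      have := Nat.sInf_le hm
      omega
    refine mem_iUnion.mpr ⟨k0, mem_iUnion.mpr ⟨Finset.mem_range.mpr (by omega), ?_⟩⟩
    refine ⟨z, ⟨hzI, ?_, hTz⟩, hfz⟩
    rw [deriv_iter hfdef]
    exact hDz
  
  have hBadvol : ∀ n : ℕ, 1 ≤ n → volume (Bad n) ≤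
      ((n:ENNReal)+1) * ENNReal.ofReal (C * Real.exp ((β - mβ) * n)) := by
    intro n hn
    have hsub : Bad n ⊆ E ∪ ⋃ k ∈ Finset.range (n+1), f^[k] '' S n k := by
      intro x hx
      by_cases hxE : x ∈ E
      · exact Or.inl hxE
      · exact Or.inr (hInc n hn x hx hxE)
    calc volume (Bad n) ≤ volume (E ∪ ⋃ k ∈ Finset.range (n+1), f^[k] '' S n k) :=
          measure_mono hsub
      _ ≤ volume E + volume (⋃ k ∈ Finset.range (n+1), f^[k] '' S n k) :=
          measure_union_le _ _
      _ = volume (⋃ k ∈ Finset.range (n+1), f^[k] '' S n k) := by rw [hE0, zero_add]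
      _ ≤ ∑ k ∈ Finset.range (n+1), volume (f^[k] '' S n k) :=
          measure_biUnion_finset_le _ _
      _ ≤ ∑ k ∈ Finset.range (n+1), ENNReal.ofReal (C * Real.exp ((β - mβ) * n)) :=
          Finset.sum_le_sum fun k hk => hSimg n k (by
            have := Finset.mem_range.mp hk; omega)
      _ = ((n:ENNReal)+1) * ENNReal.ofReal (C * Real.exp ((β - mβ) * n)) := by
          rw [Finset.sum_const, Finset.card_range, nsmul_eq_mul]
          push_cast
          ring
  have hsum : (∑' i : ℕ, volume (Bad (i+1))) ≠ ⊤ := by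
    set ρ := Real.exp (β - mβ) with hρdef
    have hρ0 : 0 < ρ := exp_pos _
    have hρ1 : ρ < 1 := by
      rw [hρdef, Real.exp_lt_one_iff]
      linarith
    set u : ℕ → ℝ := fun i => C * ((((i:ℝ))+2) * ρ^(i+1)) with hudef
    have hunn : ∀ i, 0 ≤ u i := fun i => by
      have := hρ0.le
      positivity
    have husum : Summable u := by
      have ha' : Summable (fun i : ℕ => (i:ℝ) * ρ^i) := by
        have h := summable_pow_mul_geometric_of_norm_lt_one 1
          (r := ρ) (by rw [Real.norm_eq_abs, abs_of_pos hρ0]; exact hρ1)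
        simpa using h
      have hb' : Summable (fun i : ℕ => ρ^i) := summable_geometric_of_lt_one hρ0.le hρ1
      have h1 : Summable (fun i : ℕ => ρ * ((i:ℝ) * ρ^i + 2 * ρ^i)) :=
        ((ha'.add (hb'.mul_left 2)).mul_left ρ)
      refine ((h1.mul_left C).congr fun i => ?_)
      rw [hudef]
      simp only []
      ring
    have hbd : ∀ i : ℕ, volume (Bad (i+1)) ≤ ENNReal.ofReal (u i) := by
      intro i
      refine le_trans (hBadvol (i+1) (by omega)) ?_
      have hcast : ((((i+1):ℕ):ENNReal)+1) = ((((i:ℝ)+2) : ℝ).toNNReal : ENNReal) := by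
        rw [← ENNReal.ofReal]
        rw [← ENNReal.ofReal_natCast (i+1)]
        rw [← ENNReal.ofReal_one, ← ENNReal.ofReal_add (by positivity) (by norm_num)]
        congr 1
        push_cast
        ring
      rw [hcast, ← ENNReal.ofReal, ← ENNReal.ofReal_mul (by positivity)]
      refine ENNReal.ofReal_le_ofReal ?_
      have hexp : Real.exp ((β - mβ) * (((i+1):ℕ):ℝ)) = ρ^(i+1) := by
        rw [hρdef, ← Real.exp_nat_mul]
        congr 1
        push_cast
        ring
      rw [hexp, hudef]
      simp only []
      push_cast
      ring_nf
      exact le_rfl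
    refine ne_top_of_le_ne_top ?_ (ENNReal.tsum_le_tsum hbd)
    rw [← ENNReal.ofReal_tsum_of_nonneg hunn husum]
    exact ENNReal.ofReal_ne_top
  have hBC : ∀ᵐ x : ℝ, ∀ᶠ i in Filter.atTop, x ∉ Bad (i+1) :=
    ae_eventually_notMem hsum
  have hEae : ∀ᵐ x : ℝ, x ∉ E := (measure_eq_zero_iff_ae_notMem).mp hE0
  refine ⟨β, hβ, ?_⟩
  refine ae_restrict_of_ae ?_
  filter_upwards [hBC, hEae] with x hx1 hx2
  obtain ⟨N, hNbd⟩ := Filter.eventually_atTop.mp hx1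
  have hcont : ∀ n : ℕ, Continuous fun w => |deriv (f^[n]) w| :=
    fun n => (contDeriv hfdef n).abs
  set Kset : ℕ → Set ℝ := fun n => Icc (-1:ℝ) 1 ∩ f^[n] ⁻¹' {x} with hKsetdef
  have hKcomp : ∀ n, IsCompact (Kset n) := fun n =>
    isCompact_Icc.inter_right (isClosed_singleton.preimage ((contF hfdef).iterate n))
  set V : ℕ → Set ℝ := fun n => insert 1 ((fun w => |deriv (f^[n]) w|) '' Kset n) with hVdef
  have hVcomp : ∀ n, IsCompact (V n) := fun n => ((hKcomp n).image (hcont n)).insert 1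
  have hVne : ∀ n, (V n).Nonempty := fun n => insert_nonempty _ _
  set v : ℕ → ℝ := fun n => sInf (V n) with hvdef
  have hvmem : ∀ n, v n ∈ V n := fun n => (hVcomp n).sInf_mem (hVne n)
  have hvpos : ∀ n, 0 < v n := by
    intro n
    rcases hvmem n with h | h
    · rw [h]; norm_num
    · obtain ⟨w, hwK, hvw⟩ := h
      rw [← hvw]
      show 0 < |deriv (f^[n]) w|
      rw [deriv_iter hfdef, abs_pos]
      intro h0
      rw [D] at h0
      obtain ⟨j, hj, hj0⟩ := Finset.prod_eq_zero_iff.mp h0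
      have hfj : f^[j] w = 0 := by
        rcases mul_eq_zero.mp hj0 with h' | h'
        · exfalso
          have h2a : (2*a) ≠ 0 := by positivity
          rw [neg_eq_zero] at h'
          exact h2a h'
        · exact h'
      apply hx2
      left
      refine mem_iUnion.mpr ⟨n - j - 1, ?_⟩
      have hjn : j < n := Finset.mem_range.mp hj
      have heq : f^[n-j-1+1] (0:ℝ) = x := by
        rw [← hfj, ← Function.iterate_add_apply]
        rw [show n-j-1+1+j = n by omega]
        have := hwK.2
        simpa using this
      simp [heq]
  have hvle1 : ∀ n, v n ≤ 1 := fun n => csInf_le (hVcomp n).bddBelow (mem_insert _ _)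
  have hvle : ∀ n, ∀ w ∈ Kset n, v n ≤ |deriv (f^[n]) w| := fun n w hw =>
    csInf_le (hVcomp n).bddBelow (mem_insert_of_mem _ (mem_image_of_mem _ hw))
  have hrne : (Finset.range (N+1)).Nonempty := Finset.nonempty_range_iff.mpr (by omega)
  set Cx := ((Finset.range (N+1)).inf' hrne fun n => v n * Real.exp (-(β*n))) / 2 with hCxdef
  have hCxpos : 0 < Cx := by
    rw [hCxdef]
    have h := (Finset.lt_inf'_iff hrne (f := fun n => v n * Real.exp (-(β*n))) (a := 0)).mpr
      (fun b _ => mul_pos (hvpos b) (exp_pos _))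
    linarith
  have hCxle : Cx ≤ 1/2 := by
    have h1 : ((Finset.range (N+1)).inf' hrne fun n => v n * Real.exp (-(β*n)))
        ≤ v 0 * Real.exp (-(β*(0:ℕ))) :=
      Finset.inf'_le _ (Finset.mem_range.mpr (by omega))
    have h2 := hvle1 0
    rw [hCxdef]
    simp only [Nat.cast_zero, mul_zero, neg_zero, Real.exp_zero, mul_one] at h1
    linarith
  refine ⟨Cx, hCxpos, ?_⟩
  intro n hn y hyI hfy
  by_cases hcase : n ≤ N
  · have h1 : ((Finset.range (N+1)).inf' hrne fun n => v n * Real.exp (-(β*n)))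
        ≤ v n * Real.exp (-(β*n)) :=
      Finset.inf'_le _ (Finset.mem_range.mpr (by omega))
    have h2 : v n ≤ |deriv (f^[n]) y| := hvle n y ⟨hyI, hfy⟩
    have h3 : 0 < v n := hvpos n
    have h4 : Cx * Real.exp (β*n) ≤ v n / 2 := by
      rw [hCxdef]
      rw [div_mul_eq_mul_div]
      rw [div_le_div_iff₀ (by norm_num) (by norm_num)]
      have h5 := mul_le_mul_of_nonneg_right h1 (exp_pos (β*(n:ℝ))).le
      rw [mul_assoc, ← Real.exp_add, neg_add_cancel, Real.exp_zero, mul_one] at h5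
      linarith
    linarith
  · push_neg at hcase
    obtain ⟨i, rfl⟩ : ∃ i, n = i + 1 := ⟨n - 1, by omega⟩
    have hnb : x ∉ Bad (i+1) := hNbd i (by omega)
    have h5 : Real.exp (β*((i+1:ℕ):ℝ)) < |deriv (f^[i+1]) y| := by
      by_contra hle
      exact hnb ⟨y, hyI, hfy, not_lt.mp hle⟩
    have h6 : Cx * Real.exp (β*((i+1:ℕ):ℝ)) ≤ (1/2) * Real.exp (β*((i+1:ℕ):ℝ)) :=
      mul_le_mul_of_nonneg_right hCxle (exp_pos _).le
    nlinarith [exp_pos (β*((i+1:ℕ):ℝ))]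
end

section
/- Let g : S¹ × I → S¹ × I be a C¹ map of the forward-invariant region S¹ × I ⊂ S¹ × ℝ (a Viana map or a C⁰-small perturbation of the skew product (s,x) ↦ (ds mod 1, a₀ + α sin(2πs) − x²)), let λ > 0, define h(X) = min{n > 0 : |det Dg^n(X)| ≥ e^{λn}} and Γ_n = {X ∈ S¹ × I : h(X) ≥ n}, and suppose there exist constants C, c > 0 such that Leb(Γ_n) ≤ C·e^{−c√n} for every n ≥ 1. Then there exists β > 0 such that for Lebesgue almost every X ∈ S¹ × I there is C_X > 0 with |det Dg^n(Y)| > C_X · e^{β√n} for every n ≥ 1 and every Y ∈ g^{−n}(X). -/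
open MeasureTheory Set Function Real

/-- `|det DG^n(X)|` for a map `G` of the plane (a lift of a cylinder map `S¹ × ℝ`):
the absolute value of the Jacobian determinant of the `n`-th iterate of `G` at `X`. -/
noncomputable def absDetIter2 (G : ℝ × ℝ → ℝ × ℝ) (n : ℕ) (X : ℝ × ℝ) : ℝ :=
  |(fderiv ℝ (G^[n]) X).det|

/-- `h(X) = min {n > 0 : |det DG^n(X)| ≥ e^{λ n}}`, with value `∞` if no such `n`
exists. -/
noncomputable def firstExpTime2 (G : ℝ × ℝ → ℝ × ℝ) (lam : ℝ) (X : ℝ × ℝ) : ℕ∞ :=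
  sInf {N : ℕ∞ | ∃ m : ℕ, (m : ℕ∞) = N ∧ 0 < m ∧
    Real.exp (lam * m) ≤ absDetIter2 G m X}

namespace VBC

variable {G : ℝ × ℝ → ℝ × ℝ}

lemma contDiff_iter (hG : ContDiff ℝ 1 G) (n : ℕ) : ContDiff ℝ 1 (G^[n]) := by
  induction n with
  | zero => simpa using contDiff_id
  | succ n ih => rw [Function.iterate_succ']; exact hG.comp ih

lemma absDetIter2_nonneg (n : ℕ) (X : ℝ × ℝ) : 0 ≤ absDetIter2 G n X := abs_nonneg _

lemma absDetIter2_zero (X : ℝ × ℝ) : absDetIter2 G 0 X = 1 := by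
  simp [absDetIter2, Function.iterate_zero, fderiv_id,
    ContinuousLinearMap.det, ContinuousLinearMap.coe_id, LinearMap.det_id]

lemma absDetIter2_add (hG : ContDiff ℝ 1 G) (a b : ℕ) (Y : ℝ × ℝ) :
    absDetIter2 G (a + b) Y = absDetIter2 G a (G^[b] Y) * absDetIter2 G b Y := by
  have h1 : DifferentiableAt ℝ (G^[a]) (G^[b] Y) :=
    ((contDiff_iter hG a).differentiable one_ne_zero) _
  have h2 : DifferentiableAt ℝ (G^[b]) Y :=
    ((contDiff_iter hG b).differentiable one_ne_zero) Y
  have hcomp : fderiv ℝ (G^[a + b]) Y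
      = (fderiv ℝ (G^[a]) (G^[b] Y)).comp (fderiv ℝ (G^[b]) Y) := by
    rw [Function.iterate_add]
    exact fderiv_comp Y h1 h2
  rw [absDetIter2, absDetIter2, absDetIter2, hcomp, ← abs_mul]
  congr 1
  simp [ContinuousLinearMap.det, ContinuousLinearMap.coe_comp, LinearMap.det_comp]

lemma continuous_absDetIter2 (hG : ContDiff ℝ 1 G) (n : ℕ) :
    Continuous (fun X => absDetIter2 G n X) := by
  have h := ((contDiff_iter hG n).continuous_fderiv one_ne_zero)
  exact (ContinuousLinearMap.continuous_det.comp h).abs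

end VBC

namespace VBC
variable {G : ℝ × ℝ → ℝ × ℝ} {k : ℤ}

lemma G_translate (hGper : ∀ X : ℝ × ℝ, G (X + ((1 : ℝ), (0 : ℝ))) = G X + ((k : ℝ), (0 : ℝ)))
    (j : ℤ) (X : ℝ × ℝ) : G (X + ((j : ℝ), (0 : ℝ))) = G X + (((j * k : ℤ) : ℝ), (0 : ℝ)) := by
  induction j using Int.induction_on with
  | zero => simp [Prod.mk_zero_zero]
  | succ i ih =>
      have e : (X + ((((i : ℤ) + 1 : ℤ) : ℝ), (0:ℝ))) = (X + (((i:ℤ) : ℝ), (0:ℝ))) + ((1:ℝ), (0:ℝ)) := by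
        rw [add_assoc]; congr 1
        simp only [Prod.mk_add_mk, Prod.mk.injEq]
        constructor <;> (push_cast; ring)
      rw [e, hGper, ih, add_assoc]
      congr 1
      simp only [Prod.mk_add_mk, Prod.mk.injEq]
      constructor <;> (push_cast; ring)
  | pred i ih =>
      have e : (X + ((((-(i:ℤ) - 1 : ℤ)) : ℝ), (0:ℝ))) + ((1:ℝ),(0:ℝ)) = X + ((((-(i:ℤ)) : ℤ) : ℝ), (0:ℝ)) := by
        rw [add_assoc]; congr 1
        simp only [Prod.mk_add_mk, Prod.mk.injEq]
        constructor <;> (push_cast; ring)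
      have := hGper (X + ((((-(i:ℤ) - 1 : ℤ)) : ℝ), (0:ℝ)))
      rw [e, ih] at this
      have e2 : G (X + ((((-(i:ℤ) - 1 : ℤ)) : ℝ), (0:ℝ)))
          = G X + ((((-(i:ℤ)) * k : ℤ) : ℝ), (0:ℝ)) - ((k:ℝ), (0:ℝ)) :=
        eq_sub_of_add_eq this.symm
      rw [e2, add_sub_assoc]
      congr 1
      simp only [Prod.mk_sub_mk, Prod.mk.injEq]
      constructor <;> (push_cast; ring)

lemma iter_translate (hGper : ∀ X : ℝ × ℝ, G (X + ((1 : ℝ), (0 : ℝ))) = G X + ((k : ℝ), (0 : ℝ)))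
    (n : ℕ) (j : ℤ) (X : ℝ × ℝ) :
    G^[n] (X + ((j : ℝ), (0 : ℝ))) = G^[n] X + (((j * k ^ n : ℤ) : ℝ), (0 : ℝ)) := by
  induction n generalizing X with
  | zero => simp
  | succ n ih =>
      rw [Function.iterate_succ_apply', Function.iterate_succ_apply', ih, G_translate hGper]
      congr 2
      push_cast; ring

lemma fderiv_iter_translate (hG : ContDiff ℝ 1 G)
    (hGper : ∀ X : ℝ × ℝ, G (X + ((1 : ℝ), (0 : ℝ))) = G X + ((k : ℝ), (0 : ℝ)))
    (n : ℕ) (j : ℤ) (X : ℝ × ℝ) :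
    fderiv ℝ (G^[n]) (X + ((j : ℝ), (0 : ℝ))) = fderiv ℝ (G^[n]) X := by
  have hdiff : Differentiable ℝ (G^[n]) := (contDiff_iter hG n).differentiable one_ne_zero
  have ht : HasFDerivAt (fun W : ℝ × ℝ => W + ((j : ℝ), (0:ℝ)))
      (ContinuousLinearMap.id ℝ (ℝ × ℝ)) X := (hasFDerivAt_id X).add_const _
  have h2 : HasFDerivAt (fun W => G^[n] (W + ((j : ℝ), (0:ℝ))))
      (fderiv ℝ (G^[n]) (X + ((j : ℝ), (0:ℝ)))) X := by
    have := ((hdiff (X + ((j : ℝ), (0:ℝ)))).hasFDerivAt).comp X ht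
    exact this
  have e1 : (fun W => G^[n] (W + ((j : ℝ), (0:ℝ))))
      = fun W => G^[n] W + (((j * k ^ n : ℤ) : ℝ), (0:ℝ)) := funext fun W => iter_translate hGper n j W
  rw [e1] at h2
  have h3 : HasFDerivAt (fun W => G^[n] W + (((j * k ^ n : ℤ) : ℝ), (0:ℝ)))
      (fderiv ℝ (G^[n]) X) X := (hdiff X).hasFDerivAt.add_const _
  exact h2.unique h3

lemma absDetIter2_translate (hG : ContDiff ℝ 1 G)
    (hGper : ∀ X : ℝ × ℝ, G (X + ((1 : ℝ), (0 : ℝ))) = G X + ((k : ℝ), (0 : ℝ)))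
    (n : ℕ) (j : ℤ) (X : ℝ × ℝ) :
    absDetIter2 G n (X + ((j : ℝ), (0 : ℝ))) = absDetIter2 G n X := by
  unfold absDetIter2
  rw [fderiv_iter_translate hG hGper]

lemma firstExpTime2_translate (hG : ContDiff ℝ 1 G)
    (hGper : ∀ X : ℝ × ℝ, G (X + ((1 : ℝ), (0 : ℝ))) = G X + ((k : ℝ), (0 : ℝ)))
    (lam : ℝ) (j : ℤ) (X : ℝ × ℝ) :
    firstExpTime2 G lam (X + ((j : ℝ), (0 : ℝ))) = firstExpTime2 G lam X := by
  unfold firstExpTime2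
  congr 1
  ext N
  simp only [Set.mem_setOf_eq]
  constructor <;> rintro ⟨m, rfl, hm, hle⟩ <;> exact ⟨m, rfl, hm, by
    rwa [absDetIter2_translate hG hGper] at * ⟩

end VBC

namespace VBC
variable {G : ℝ × ℝ → ℝ × ℝ} {lam : ℝ}

lemma le_firstExpTime_iff (q : ℕ) (Z : ℝ × ℝ) :
    (q : ℕ∞) ≤ firstExpTime2 G lam Z ↔
      ∀ m : ℕ, 0 < m → m < q → absDetIter2 G m Z < Real.exp (lam * m) := by
  rw [firstExpTime2, le_sInf_iff]
  constructor
  · intro H m hm hmq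
    by_contra h
    push_neg at h
    have h2 := H (m : ℕ∞) ⟨m, rfl, hm, h⟩
    have : q ≤ m := by exact_mod_cast h2
    omega
  · rintro H N ⟨m, rfl, hm, hle⟩
    by_contra h
    push_neg at h
    have hmq : m < q := by exact_mod_cast h
    exact absurd hle (not_le.mpr (H m hm hmq))

lemma exists_of_firstExpTime_lt (n : ℕ) (Z : ℝ × ℝ)
    (h : firstExpTime2 G lam Z < ((n + 1 : ℕ) : ℕ∞)) :
    ∃ m : ℕ, 0 < m ∧ m ≤ n ∧ Real.exp (lam * m) ≤ absDetIter2 G m Z := by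
  obtain ⟨N, hN, hlt⟩ := sInf_lt_iff.mp h
  obtain ⟨m, rfl, hm, hle⟩ := hN
  have : m < n + 1 := by exact_mod_cast hlt
  exact ⟨m, hm, by omega, hle⟩

lemma decomp (hG : ContDiff ℝ 1 G) (hlam : 0 < lam) :
    ∀ n : ℕ, ∀ Y : ℝ × ℝ, ∃ r s : ℕ, r + s = n ∧
      ((r + 1 : ℕ) : ℕ∞) ≤ firstExpTime2 G lam (G^[s] Y) ∧
      Real.exp (lam * s) * absDetIter2 G r (G^[s] Y) ≤ absDetIter2 G n Y := by
  intro n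
  induction n using Nat.strong_induction_on with
  | _ n ih =>
    intro Y
    by_cases hh : ((n + 1 : ℕ) : ℕ∞) ≤ firstExpTime2 G lam Y
    · refine ⟨n, 0, by omega, ?_, ?_⟩
      · simpa using hh
      · simp
    · push_neg at hh
      obtain ⟨m, hm0, hmn, hmle⟩ := exists_of_firstExpTime_lt n Y hh
      obtain ⟨r, s', hrs, hcond, hineq⟩ := ih (n - m) (by omega) (G^[m] Y)
      refine ⟨r, s' + m, by omega, ?_, ?_⟩
      · rwa [Function.iterate_add_apply]
      · rw [Function.iterate_add_apply]
        have e1 : (n : ℕ) = (n - m) + m := by omega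
        rw [e1, absDetIter2_add hG (n - m) m Y]
        have hexp : Real.exp (lam * (s' + m : ℕ))
            = Real.exp (lam * s') * Real.exp (lam * m) := by
          rw [← Real.exp_add]; push_cast; ring_nf
        rw [hexp, mul_comm (Real.exp (lam * s')) (Real.exp (lam * m)),
          mul_assoc]
        calc Real.exp (lam * m) * (Real.exp (lam * s') * absDetIter2 G r (G^[s'] (G^[m] Y)))
            ≤ absDetIter2 G m Y * absDetIter2 G (n - m) (G^[m] Y) := by
              apply mul_le_mul hmle hineq
              · exact mul_nonneg (Real.exp_pos _).le (abs_nonneg _)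
              · exact abs_nonneg _
          _ = absDetIter2 G (n - m) (G^[m] Y) * absDetIter2 G m Y := mul_comm _ _

lemma sqrt_nat_le (m : ℕ) : Real.sqrt m ≤ (m : ℝ) := by
  rcases Nat.eq_zero_or_pos m with h | h
  · simp [h]
  · have h1 : (1 : ℝ) ≤ (m : ℝ) := by exact_mod_cast h
    rw [Real.sqrt_le_left (Nat.cast_nonneg m)]
    nlinarith

lemma sqrt_subadd {x y : ℝ} (hx : 0 ≤ x) (hy : 0 ≤ y) :
    Real.sqrt (x + y) ≤ Real.sqrt x + Real.sqrt y := by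
  have h := Real.sqrt_nonneg x
  have h2 := Real.sqrt_nonneg y
  rw [Real.sqrt_le_left (add_nonneg h h2)]
  nlinarith [Real.sq_sqrt hx, Real.sq_sqrt hy, mul_nonneg h h2]

end VBC

namespace VBC
lemma iter_inJ {G : ℝ × ℝ → ℝ × ℝ} {u v : ℝ}
    (hGinv : ∀ X : ℝ × ℝ, X.2 ∈ Set.Icc u v → (G X).2 ∈ Set.Icc u v)
    (n : ℕ) (Y : ℝ × ℝ) (hY : Y.2 ∈ Set.Icc u v) : (G^[n] Y).2 ∈ Set.Icc u v := by
  induction n with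
  | zero => simpa
  | succ n ih => rw [Function.iterate_succ_apply']; exact hGinv _ ih
end VBC

namespace VBC2

lemma meas_img_add (A : Set (ℝ × ℝ)) (w : ℝ × ℝ) :
    volume ((fun x => x + w) '' A) = volume A := by
  have e : (fun x : ℝ×ℝ => x + w) '' A = (fun x : ℝ×ℝ => x + (-w)) ⁻¹' A := by
    ext y
    constructor
    · rintro ⟨x, hx, rfl⟩; simpa [Set.mem_preimage]
    · intro h; exact ⟨y + (-w), h, by show y + -w + w = y; rw [add_assoc, neg_add_cancel, add_zero]⟩
  rw [e, measure_preimage_add_right]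

lemma volume_vline (a u v : ℝ) : volume (({a} : Set ℝ) ×ˢ Icc u v) = 0 := by
  rw [MeasureTheory.Measure.volume_eq_prod, MeasureTheory.Measure.prod_prod]
  simp

lemma tsum_translate_inter_le (u v : ℝ) (A : Set (ℝ × ℝ)) :
    ∑' m : ℤ, volume (((fun W : ℝ × ℝ => W + ((m : ℝ), (0:ℝ))) '' A)
        ∩ (Icc (0:ℝ) 1 ×ˢ Icc u v)) ≤ volume A := by
  set T := toMeasurable volume A with hT
  have hTmeas : MeasurableSet T := measurableSet_toMeasurable _ _
  have hAT : A ⊆ T := subset_toMeasurable _ _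
  set g : ℤ → Set (ℝ × ℝ) := fun m => T ∩ (Ico (-(m:ℝ)) (1 - m) ×ˢ Icc u v) with hg
  have hgmeas : ∀ m, MeasurableSet (g m) :=
    fun m => hTmeas.inter (measurableSet_Ico.prod measurableSet_Icc)
  have hgdisj : Pairwise (Function.onFun Disjoint g) := by
    intro m m' hmm
    rw [Function.onFun, Set.disjoint_left]
    rintro W ⟨-, hW1, -⟩ ⟨-, hW2, -⟩
    have e1 : ⌊W.1⌋ = -m := by
      rw [Int.floor_eq_iff]
      constructor
      · exact_mod_cast hW1.1
      · push_cast; linarith [hW1.2]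
    have e2 : ⌊W.1⌋ = -m' := by
      rw [Int.floor_eq_iff]
      constructor
      · exact_mod_cast hW2.1
      · push_cast; linarith [hW2.2]
    omega
  have hterm : ∀ m : ℤ, volume (((fun W : ℝ × ℝ => W + ((m : ℝ), (0:ℝ))) '' A)
      ∩ (Icc (0:ℝ) 1 ×ˢ Icc u v)) ≤ volume (g m) := by
    intro m
    have e0 : ((fun W : ℝ × ℝ => W + ((m : ℝ), (0:ℝ))) '' A) ∩ (Icc (0:ℝ) 1 ×ˢ Icc u v)
        = (fun W : ℝ × ℝ => W + ((m : ℝ), (0:ℝ))) ''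
          (A ∩ ((fun W : ℝ × ℝ => W + ((m : ℝ), (0:ℝ))) ⁻¹' (Icc (0:ℝ) 1 ×ˢ Icc u v))) := by
      rw [Set.image_inter_preimage]
    rw [e0, meas_img_add]
    have e1 : ((fun W : ℝ × ℝ => W + ((m : ℝ), (0:ℝ))) ⁻¹' (Icc (0:ℝ) 1 ×ˢ Icc u v))
        = Icc (-(m:ℝ)) (1 - m) ×ˢ Icc u v := by
      ext W
      simp only [Set.mem_preimage, Set.mem_prod, Prod.fst_add, Prod.snd_add, Set.mem_Icc]
      constructor
      · rintro ⟨⟨h1, h2⟩, h3, h4⟩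
        refine ⟨⟨by linarith, by linarith⟩, by linarith, by linarith⟩
      · rintro ⟨⟨h1, h2⟩, h3, h4⟩
        refine ⟨⟨by linarith, by linarith⟩, by linarith, by linarith⟩
    rw [e1]
    have hsub : A ∩ (Icc (-(m:ℝ)) (1 - m) ×ˢ Icc u v)
        ⊆ g m ∪ (({(1 - m : ℝ)} : Set ℝ) ×ˢ Icc u v) := by
      rintro W ⟨hWA, hW1, hW2⟩
      rcases lt_or_eq_of_le hW1.2 with h | h
      · exact Or.inl ⟨hAT hWA, ⟨hW1.1, h⟩, hW2⟩
      · exact Or.inr ⟨h, hW2⟩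
    calc volume (A ∩ (Icc (-(m:ℝ)) (1 - m) ×ˢ Icc u v))
        ≤ volume (g m ∪ (({(1 - m : ℝ)} : Set ℝ) ×ˢ Icc u v)) := measure_mono hsub
      _ ≤ volume (g m) + volume (({(1 - m : ℝ)} : Set ℝ) ×ˢ Icc u v) := measure_union_le _ _
      _ = volume (g m) := by rw [volume_vline]; ring
  calc ∑' m : ℤ, volume (((fun W : ℝ × ℝ => W + ((m : ℝ), (0:ℝ))) '' A)
        ∩ (Icc (0:ℝ) 1 ×ˢ Icc u v))
      ≤ ∑' m : ℤ, volume (g m) := ENNReal.tsum_le_tsum hterm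
    _ = volume (⋃ m : ℤ, g m) := (measure_iUnion hgdisj hgmeas).symm
    _ ≤ volume T := measure_mono (Set.iUnion_subset fun m => Set.inter_subset_left)
    _ = volume A := measure_toMeasurable A

end VBC2

/-- Backward contraction for maps of the cylinder `S¹ × I` (such as Viana maps, i.e.
`C⁰`-small perturbations of `(s,x) ↦ (d s mod 1, a₀ + α sin (2π s) - x²)`).  The cylinder
`S¹ × ℝ`, `S¹ = ℝ/ℤ`, is modeled via a `C¹` lift `G : ℝ² → ℝ²` commuting with the deck
translation `(s,x) ↦ (s+1,x)` up to an integer horizontal translation, with compact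
forward-invariant region `S¹ × I`, `I ⊂ (-2,2)`, having fundamental domain
`[0,1] × I`.  If `Leb (Γ_n) ≤ C e^{-c √n}` for the tail sets
`Γ_n = {X ∈ S¹ × I : h(X) ≥ n}` of `h(X) = min {n > 0 : |det DG^n(X)| ≥ e^{λn}}`, then
there is `β > 0` such that for Lebesgue a.e. `X ∈ S¹ × I` there is `C_X > 0` with
`|det DG^n(Y)| > C_X e^{β √n}` for every `n ≥ 1` and every `n`-th preimage `Y` of `X` in
the cylinder. -/
theorem viana_backward_contraction
    (u v : ℝ) (hu : -2 < u) (huv : u ≤ v) (hv : v < 2)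
    (G : ℝ × ℝ → ℝ × ℝ) (hG : ContDiff ℝ 1 G) (k : ℤ)
    (hGper : ∀ X : ℝ × ℝ, G (X + ((1 : ℝ), (0 : ℝ))) = G X + ((k : ℝ), (0 : ℝ)))
    (hGinv : ∀ X : ℝ × ℝ, X.2 ∈ Icc u v → (G X).2 ∈ Icc u v)
    (lam : ℝ) (hlam : 0 < lam)
    (C c : ℝ) (hC : 0 < C) (hc : 0 < c)
    (hGamma : ∀ n : ℕ, 1 ≤ n →
      volume {X ∈ Icc (0 : ℝ) 1 ×ˢ Icc u v | (n : ℕ∞) ≤ firstExpTime2 G lam X} ≤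
        ENNReal.ofReal (C * Real.exp (-c * Real.sqrt n))) :
    ∃ β : ℝ, 0 < β ∧ ∀ᵐ X ∂(volume.restrict (Icc (0 : ℝ) 1 ×ˢ Icc u v)),
      ∃ CX : ℝ, 0 < CX ∧ ∀ n : ℕ, 1 ≤ n → ∀ Y : ℝ × ℝ, Y.2 ∈ Icc u v →
        (∃ m : ℤ, G^[n] Y = X + ((m : ℝ), (0 : ℝ))) →
        CX * Real.exp (β * Real.sqrt n) < absDetIter2 G n Y := by
  classical
  set J : Set ℝ := Icc u v with hJ
  set F : Set (ℝ × ℝ) := Icc (0:ℝ) 1 ×ˢ J with hFdef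
  have hFmeas : MeasurableSet F := measurableSet_Icc.prod measurableSet_Icc
  have hmin : 0 < min lam c := lt_min hlam hc
  set β : ℝ := min lam c / 2 with hβdef
  have hβ : 0 < β := by positivity
  refine ⟨β, hβ, ?_⟩
  -- bad sets
  set Bad : ℕ → ℕ → Set (ℝ × ℝ) := fun n r =>
    {Z : ℝ × ℝ | Z ∈ F ∧ ((r + 1 : ℕ) : ℕ∞) ≤ firstExpTime2 G lam Z ∧
      absDetIter2 G r Z ≤
        Real.exp (β * Real.sqrt n) * Real.exp (-(lam * ((n - r : ℕ) : ℝ)))} with hBaddef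
  set E : ℕ → Set (ℝ × ℝ) := fun n =>
    {X : ℝ × ℝ | X ∈ F ∧ ∃ Y : ℝ × ℝ, Y.2 ∈ J ∧
      (∃ m : ℤ, G^[n] Y = X + ((m : ℝ), (0 : ℝ))) ∧
      absDetIter2 G n Y ≤ Real.exp (β * Real.sqrt n)} with hEdef
  -- inclusion of E n into unions of images of bad sets
  have hincl : ∀ n : ℕ, E n ⊆ ⋃ r ∈ Finset.range (n + 1), ⋃ m : ℤ,
      ((fun W : ℝ × ℝ => W + ((m : ℝ), (0:ℝ))) '' (G^[r] '' Bad n r)) ∩ F := by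
    rintro n X ⟨hXF, Y, hY2, ⟨m, hm⟩, hdet⟩
    obtain ⟨r, s, hrs, hcond, hineq⟩ := VBC.decomp hG hlam n Y
    set Z0 : ℝ × ℝ := G^[s] Y with hZ0
    set j : ℤ := ⌊Z0.1⌋ with hj
    set Z : ℝ × ℝ := Z0 + (((-j : ℤ) : ℝ), (0:ℝ)) with hZdef
    have hZ1 : Z.1 = Z0.1 + ((-j : ℤ) : ℝ) := rfl
    have hZ2 : Z.2 = Z0.2 + 0 := rfl
    have hfl1 : ((⌊Z0.1⌋ : ℤ) : ℝ) ≤ Z0.1 := Int.floor_le Z0.1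
    have hfl2 : Z0.1 < ((⌊Z0.1⌋ : ℤ) : ℝ) + 1 := Int.lt_floor_add_one Z0.1
    have hZF : Z ∈ F := by
      constructor
      · rw [hZ1, Set.mem_Icc]
        push_cast
        constructor
        · linarith
        · linarith
      · rw [hZ2, add_zero]
        exact VBC.iter_inJ hGinv s Y hY2
    have hdcond : ((r + 1 : ℕ) : ℕ∞) ≤ firstExpTime2 G lam Z := by
      rw [hZdef, VBC.firstExpTime2_translate hG hGper lam (-j) Z0]
      exact hcond
    have hdZ : absDetIter2 G r Z = absDetIter2 G r Z0 :=
      VBC.absDetIter2_translate hG hGper r (-j) Z0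
    have hsmall : absDetIter2 G r Z ≤
        Real.exp (β * Real.sqrt n) * Real.exp (-(lam * ((n - r : ℕ) : ℝ))) := by
      rw [hdZ]
      have hs_cast : ((n - r : ℕ) : ℝ) = (s : ℝ) := by
        congr 1
        omega
      rw [hs_cast]
      have h1 : Real.exp (lam * s) * absDetIter2 G r Z0 ≤ Real.exp (β * Real.sqrt n) :=
        hineq.trans hdet
      have h2 : absDetIter2 G r Z0 ≤ Real.exp (β * Real.sqrt n) / Real.exp (lam * s) := by
        rw [le_div_iff₀' (Real.exp_pos _)]
        exact h1
      rwa [div_eq_mul_inv, ← Real.exp_neg] at h2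
    have hZBad : Z ∈ Bad n r := ⟨hZF, hdcond, hsmall⟩
    have hGrZ : G^[r] Z = X + (((m - j * k ^ r : ℤ) : ℝ), (0:ℝ)) := by
      rw [hZdef, VBC.iter_translate hGper r (-j) Z0]
      have : G^[r] Z0 = X + ((m : ℝ), (0:ℝ)) := by
        rw [hZ0, ← Function.iterate_add_apply, hrs, hm]
      rw [this, add_assoc]
      congr 1
      simp only [Prod.mk_add_mk, Prod.mk.injEq]
      constructor
      · push_cast; ring
      · ring
    have hXeq : X = G^[r] Z + (((j * k ^ r - m : ℤ) : ℝ), (0:ℝ)) := by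
      rw [hGrZ, add_assoc]
      have e : (((m - j * k ^ r : ℤ) : ℝ), (0:ℝ)) + (((j * k ^ r - m : ℤ) : ℝ), (0:ℝ))
          = ((0:ℝ), (0:ℝ)) := by
        simp only [Prod.mk_add_mk, Prod.mk.injEq]
        constructor
        · push_cast; ring
        · ring
      rw [e]
      have e2 : ((0:ℝ), (0:ℝ)) = (0 : ℝ × ℝ) := rfl
      rw [e2, add_zero]
    apply Set.mem_biUnion (Finset.mem_coe.mpr (Finset.mem_range.mpr (by omega : r < n + 1)))
    refine Set.mem_iUnion.mpr ⟨j * k ^ r - m, ⟨G^[r] Z, ⟨Z, hZBad, rfl⟩, hXeq.symm⟩, hXF⟩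
  -- measurability of Bad sets
  have hBadmeas : ∀ n r : ℕ, MeasurableSet (Bad n r) := by
    intro n r
    have h1 : MeasurableSet {Z : ℝ × ℝ | ((r + 1 : ℕ) : ℕ∞) ≤ firstExpTime2 G lam Z} := by
      have e : {Z : ℝ × ℝ | ((r + 1 : ℕ) : ℕ∞) ≤ firstExpTime2 G lam Z}
          = ⋂ m ∈ Finset.Ioc 0 r, {Z : ℝ × ℝ | absDetIter2 G m Z < Real.exp (lam * m)} := by
        ext Z
        simp only [Set.mem_setOf_eq, Set.mem_iInter, Finset.mem_Ioc]
        rw [VBC.le_firstExpTime_iff]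
        constructor
        · intro H m hm
          exact H m hm.1 (by omega)
        · intro H m hm1 hm2
          exact H m ⟨hm1, by omega⟩
      rw [e]
      refine Set.Finite.measurableSet_biInter (Finset.finite_toSet _) ?_
      intro m _
      exact measurableSet_lt (VBC.continuous_absDetIter2 hG m).measurable measurable_const
    have h2 : MeasurableSet {Z : ℝ × ℝ | absDetIter2 G r Z ≤
        Real.exp (β * Real.sqrt n) * Real.exp (-(lam * ((n - r : ℕ) : ℝ)))} :=
      measurableSet_le (VBC.continuous_absDetIter2 hG r).measurable measurable_const
    have e : Bad n r = F ∩ ({Z : ℝ × ℝ | ((r + 1 : ℕ) : ℕ∞) ≤ firstExpTime2 G lam Z}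
        ∩ {Z : ℝ × ℝ | absDetIter2 G r Z ≤
          Real.exp (β * Real.sqrt n) * Real.exp (-(lam * ((n - r : ℕ) : ℝ)))}) := by
      ext Z
      simp only [hBaddef, Set.mem_setOf_eq, Set.mem_inter_iff]
      try tauto
    rw [e]
    exact hFmeas.inter (h1.inter h2)
  -- image measure bound
  have himg : ∀ n r : ℕ, volume (G^[r] '' Bad n r)
      ≤ ENNReal.ofReal (Real.exp (β * Real.sqrt n) * Real.exp (-(lam * ((n - r : ℕ) : ℝ))))
        * ENNReal.ofReal (C * Real.exp (-c * Real.sqrt ((r + 1 : ℕ) : ℝ))) := by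
    intro n r
    have hder : ∀ x ∈ Bad n r, HasFDerivWithinAt (G^[r]) (fderiv ℝ (G^[r]) x) (Bad n r) x :=
      fun x _ =>
        (((VBC.contDiff_iter hG r).differentiable one_ne_zero x).hasFDerivAt).hasFDerivWithinAt
    calc volume (G^[r] '' Bad n r)
        ≤ ∫⁻ x in Bad n r, ENNReal.ofReal |(fderiv ℝ (G^[r]) x).det| ∂volume :=
          addHaar_image_le_lintegral_abs_det_fderiv volume (hBadmeas n r) hder
      _ ≤ ∫⁻ _x in Bad n r, ENNReal.ofReal (Real.exp (β * Real.sqrt n)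
            * Real.exp (-(lam * ((n - r : ℕ) : ℝ)))) ∂volume := by
          refine setLIntegral_mono' (hBadmeas n r) ?_
          intro x hx
          exact ENNReal.ofReal_le_ofReal hx.2.2
      _ = ENNReal.ofReal (Real.exp (β * Real.sqrt n) * Real.exp (-(lam * ((n - r : ℕ) : ℝ))))
            * volume (Bad n r) := setLIntegral_const _ _
      _ ≤ _ := by
          apply mul_le_mul_right
          calc volume (Bad n r)
              ≤ volume {X ∈ Icc (0:ℝ) 1 ×ˢ Icc u v |
                  ((r + 1 : ℕ) : ℕ∞) ≤ firstExpTime2 G lam X} := by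
                apply measure_mono
                rintro Z ⟨hZF, hZcond, -⟩
                exact ⟨hZF, hZcond⟩
            _ ≤ ENNReal.ofReal (C * Real.exp (-c * Real.sqrt ((r + 1 : ℕ) : ℝ))) :=
                hGamma (r + 1) (by omega)
  -- measure of E n
  have hEb : ∀ n : ℕ, volume (E n) ≤ ∑ r ∈ Finset.range (n + 1),
      ENNReal.ofReal (Real.exp (β * Real.sqrt n) * Real.exp (-(lam * ((n - r : ℕ) : ℝ))))
        * ENNReal.ofReal (C * Real.exp (-c * Real.sqrt ((r + 1 : ℕ) : ℝ))) := by
    intro n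
    calc volume (E n) ≤ volume (⋃ r ∈ Finset.range (n + 1), ⋃ m : ℤ,
        ((fun W : ℝ × ℝ => W + ((m : ℝ), (0:ℝ))) '' (G^[r] '' Bad n r)) ∩ F) :=
          measure_mono (hincl n)
      _ ≤ ∑ r ∈ Finset.range (n + 1), volume (⋃ m : ℤ,
            ((fun W : ℝ × ℝ => W + ((m : ℝ), (0:ℝ))) '' (G^[r] '' Bad n r)) ∩ F) :=
          measure_biUnion_finset_le _ _
      _ ≤ _ := by
          apply Finset.sum_le_sum
          intro r _
          calc volume (⋃ m : ℤ,
              ((fun W : ℝ × ℝ => W + ((m : ℝ), (0:ℝ))) '' (G^[r] '' Bad n r)) ∩ F)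
              ≤ ∑' m : ℤ, volume
                  (((fun W : ℝ × ℝ => W + ((m : ℝ), (0:ℝ))) '' (G^[r] '' Bad n r)) ∩ F) :=
                measure_iUnion_le _
            _ ≤ volume (G^[r] '' Bad n r) := VBC2.tsum_translate_inter_le u v _
            _ ≤ _ := himg n r
  -- exponent arithmetic
  have hexp_bound : ∀ n r : ℕ, r ≤ n →
      Real.exp (β * Real.sqrt n) * Real.exp (-(lam * ((n - r : ℕ) : ℝ)))
        * (C * Real.exp (-c * Real.sqrt ((r + 1 : ℕ) : ℝ)))
      ≤ C * Real.exp (-(β * Real.sqrt ((n : ℝ) + 1))) := by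
    intro n r hr
    set a : ℝ := ((n - r : ℕ) : ℝ) with ha
    set b : ℝ := ((r + 1 : ℕ) : ℝ) with hb
    have hab : a + b = (n : ℝ) + 1 := by
      rw [ha, hb]
      have e : ((n - r : ℕ) : ℝ) = (n : ℝ) - (r : ℝ) := by
        exact Nat.cast_sub hr
      rw [e]
      push_cast
      ring
    have h6 : 0 ≤ a := by rw [ha]; positivity
    have h7 : 0 ≤ b := by rw [hb]; positivity
    have h1 : Real.sqrt (n : ℝ) ≤ Real.sqrt ((n : ℝ) + 1) :=
      Real.sqrt_le_sqrt (by linarith)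
    have h2 : Real.sqrt ((n : ℝ) + 1) ≤ Real.sqrt a + Real.sqrt b := by
      rw [← hab]
      exact VBC.sqrt_subadd h6 h7
    have h3 : Real.sqrt a ≤ a := by rw [ha]; exact VBC.sqrt_nat_le _
    have h4 : 0 ≤ Real.sqrt b := Real.sqrt_nonneg b
    have h5 : 0 ≤ Real.sqrt a := Real.sqrt_nonneg a
    have hm1 : min lam c ≤ lam := min_le_left _ _
    have hm2 : min lam c ≤ c := min_le_right _ _
    have h2β : 2 * β = min lam c := by rw [hβdef]; ring
    have key : β * Real.sqrt (n : ℝ) + (-(lam * a)) + (-c * Real.sqrt b)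
        ≤ -(β * Real.sqrt ((n : ℝ) + 1)) := by
      have k1 : β * Real.sqrt (n : ℝ) ≤ β * Real.sqrt ((n : ℝ) + 1) :=
        mul_le_mul_of_nonneg_left h1 hβ.le
      have k2 : min lam c * Real.sqrt ((n : ℝ) + 1)
          ≤ min lam c * (Real.sqrt a + Real.sqrt b) :=
        mul_le_mul_of_nonneg_left h2 hmin.le
      have k3 : min lam c * Real.sqrt a ≤ lam * Real.sqrt a :=
        mul_le_mul_of_nonneg_right hm1 h5
      have k4 : lam * Real.sqrt a ≤ lam * a := mul_le_mul_of_nonneg_left h3 hlam.le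
      have k5 : min lam c * Real.sqrt b ≤ c * Real.sqrt b :=
        mul_le_mul_of_nonneg_right hm2 h4
      nlinarith [k1, k2, k3, k4, k5]
    calc Real.exp (β * Real.sqrt n) * Real.exp (-(lam * a))
          * (C * Real.exp (-c * Real.sqrt b))
        = C * Real.exp (β * Real.sqrt (n : ℝ) + (-(lam * a)) + (-c * Real.sqrt b)) := by
          rw [Real.exp_add, Real.exp_add]
          ring
      _ ≤ C * Real.exp (-(β * Real.sqrt ((n : ℝ) + 1))) :=
          mul_le_mul_of_nonneg_left (Real.exp_le_exp.mpr key) hC.le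
  -- final per-n bound
  set K : ℝ := C * 6 ^ 6 / β ^ 6 with hKdef
  have hKpos : 0 < K := by positivity
  have hEb2 : ∀ n : ℕ, volume (E n) ≤ ENNReal.ofReal (K / ((n : ℝ) + 1) ^ 2) := by
    intro n
    have step1 : volume (E n) ≤ ((n + 1 : ℕ) : ENNReal)
        * ENNReal.ofReal (C * Real.exp (-(β * Real.sqrt ((n : ℝ) + 1)))) := by
      refine (hEb n).trans ?_
      calc ∑ r ∈ Finset.range (n + 1),
          ENNReal.ofReal (Real.exp (β * Real.sqrt n) * Real.exp (-(lam * ((n - r : ℕ) : ℝ))))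
            * ENNReal.ofReal (C * Real.exp (-c * Real.sqrt ((r + 1 : ℕ) : ℝ)))
          ≤ ∑ r ∈ Finset.range (n + 1),
              ENNReal.ofReal (C * Real.exp (-(β * Real.sqrt ((n : ℝ) + 1)))) := by
            apply Finset.sum_le_sum
            intro r hrmem
            have hr : r ≤ n := by
              have := Finset.mem_range.mp hrmem
              omega
            rw [← ENNReal.ofReal_mul (by positivity)]
            exact ENNReal.ofReal_le_ofReal (hexp_bound n r hr)
        _ = ((n + 1 : ℕ) : ENNReal)
              * ENNReal.ofReal (C * Real.exp (-(β * Real.sqrt ((n : ℝ) + 1)))) := by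
            rw [Finset.sum_const, Finset.card_range, nsmul_eq_mul]
    refine step1.trans ?_
    rw [← ENNReal.ofReal_natCast (n + 1),
      ← ENNReal.ofReal_mul (by positivity : (0:ℝ) ≤ ((n + 1 : ℕ) : ℝ))]
    apply ENNReal.ofReal_le_ofReal
    -- real inequality
    set t : ℝ := Real.sqrt ((n : ℝ) + 1) with htdef
    have ht2 : t ^ 2 = (n : ℝ) + 1 := Real.sq_sqrt (by positivity)
    have ht0 : 0 ≤ t := Real.sqrt_nonneg _
    have hP : (0 : ℝ) < (n : ℝ) + 1 := by positivity
    have hEexp : β * t / 6 + 1 ≤ Real.exp (β * t / 6) := Real.add_one_le_exp _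
    have hpow : (β * t / 6) ^ 6 ≤ Real.exp (β * t / 6) ^ 6 := by
      apply pow_le_pow_left₀ (by positivity)
      linarith
    have hexp6 : Real.exp (β * t) = Real.exp (β * t / 6) ^ 6 := by
      rw [← Real.exp_nat_mul]
      congr 1
      push_cast
      ring
    have hlow : β ^ 6 * ((n : ℝ) + 1) ^ 3 / 6 ^ 6 ≤ Real.exp (β * t) := by
      rw [hexp6]
      calc β ^ 6 * ((n : ℝ) + 1) ^ 3 / 6 ^ 6 = (β * t / 6) ^ 6 := by
            rw [← ht2]
            ring
        _ ≤ Real.exp (β * t / 6) ^ 6 := hpow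
    have hD : (0 : ℝ) < β ^ 6 * ((n : ℝ) + 1) ^ 3 / 6 ^ 6 := by positivity
    have hinv : 1 / Real.exp (β * t) ≤ 1 / (β ^ 6 * ((n : ℝ) + 1) ^ 3 / 6 ^ 6) :=
      one_div_le_one_div_of_le hD hlow
    have hexpneg : Real.exp (-(β * t)) = 1 / Real.exp (β * t) := by
      rw [Real.exp_neg, one_div]
    calc ((n + 1 : ℕ) : ℝ) * (C * Real.exp (-(β * t)))
        = ((n : ℝ) + 1) * C * (1 / Real.exp (β * t)) := by
          rw [hexpneg]
          push_cast
          ring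
      _ ≤ ((n : ℝ) + 1) * C * (1 / (β ^ 6 * ((n : ℝ) + 1) ^ 3 / 6 ^ 6)) := by
          apply mul_le_mul_of_nonneg_left hinv (by positivity)
      _ = K / ((n : ℝ) + 1) ^ 2 := by
          rw [hKdef]
          field_simp
  -- summability
  have hsummable : Summable (fun n : ℕ => K / ((n : ℝ) + 1) ^ 2) := by
    have h0 : Summable (fun n : ℕ => 1 / (n : ℝ) ^ 2) :=
      Real.summable_one_div_nat_pow.mpr (by norm_num)
    have h1 : Summable (fun n : ℕ => 1 / ((n : ℝ) + 1) ^ 2) := by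
      have := (summable_nat_add_iff 1).mpr h0
      apply this.congr
      intro n
      push_cast
      ring
    have h2 := h1.mul_left K
    apply h2.congr
    intro n
    rw [mul_one_div]
  have hsumne : (∑' n : ℕ, volume (E n)) ≠ ⊤ := by
    have h1 : (∑' n : ℕ, volume (E n)) ≤ ∑' n : ℕ, ENNReal.ofReal (K / ((n : ℝ) + 1) ^ 2) :=
      ENNReal.tsum_le_tsum hEb2
    have h2 : (∑' n : ℕ, ENNReal.ofReal (K / ((n : ℝ) + 1) ^ 2))
        = ENNReal.ofReal (∑' n : ℕ, K / ((n : ℝ) + 1) ^ 2) :=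
      (ENNReal.ofReal_tsum_of_nonneg (fun n => by positivity) hsummable).symm
    exact ne_top_of_le_ne_top (by rw [h2]; exact ENNReal.ofReal_ne_top) h1
  -- Borel-Cantelli
  have hBC : ∀ᵐ X ∂(volume : Measure (ℝ × ℝ)), ∀ᶠ n in Filter.atTop, X ∉ E n :=
    MeasureTheory.ae_eventually_notMem hsumne
  -- null sets from zero determinant
  set Zer : ℕ → Set (ℝ × ℝ) := fun n => F ∩ {Z : ℝ × ℝ | (fderiv ℝ (G^[n]) Z).det = 0}
    with hZerdef
  set Nn : ℕ → Set (ℝ × ℝ) := fun n =>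
    ⋃ m : ℤ, (fun W : ℝ × ℝ => W + ((m : ℝ), (0:ℝ))) '' (G^[n] '' Zer n) with hNndef
  have hNnull : volume (⋃ n : ℕ, Nn n) = 0 := by
    refine measure_iUnion_null fun n => measure_iUnion_null fun m => ?_
    rw [VBC2.meas_img_add]
    refine addHaar_image_eq_zero_of_det_fderivWithin_eq_zero volume
      (f' := fun x => fderiv ℝ (G^[n]) x) ?_ ?_
    · exact fun x _ =>
        (((VBC.contDiff_iter hG n).differentiable one_ne_zero x).hasFDerivAt).hasFDerivWithinAt
    · exact fun x hx => hx.2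
  have hBC2 : ∀ᵐ X ∂(volume : Measure (ℝ × ℝ)), X ∉ ⋃ n : ℕ, Nn n :=
    measure_eq_zero_iff_ae_notMem.mp hNnull
  have hae : ∀ᵐ X ∂(volume.restrict F),
      (∀ᶠ n in Filter.atTop, X ∉ E n) ∧ X ∉ ⋃ n : ℕ, Nn n :=
    ae_restrict_of_ae (hBC.and hBC2)
  have haemem : ∀ᵐ X ∂(volume.restrict F), X ∈ F := ae_restrict_mem hFmeas
  filter_upwards [hae, haemem] with X hX hXF
  obtain ⟨hev, hnotN⟩ := hX
  obtain ⟨N, hN⟩ := Filter.eventually_atTop.mp hev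
  -- compact set of representatives of preimages
  set S : Set (ℝ × ℝ) := {W : ℝ × ℝ | ∃ m : ℤ, W = X + ((m : ℝ), (0:ℝ))} with hSdef
  have hScl : IsClosed S := by
    have e : S = (fun W : ℝ × ℝ => W - X) ⁻¹'
        ((Set.range ((↑) : ℤ → ℝ)) ×ˢ ({0} : Set ℝ)) := by
      ext W
      simp only [hSdef, Set.mem_setOf_eq, Set.mem_preimage, Set.mem_prod, Set.mem_range,
        Set.mem_singleton_iff]
      constructor
      · rintro ⟨m, rfl⟩
        constructor
        · exact ⟨m, by simp⟩
        · simp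
      · rintro ⟨⟨m, hm⟩, h0⟩
        refine ⟨m, ?_⟩
        have h1 : W.1 = X.1 + (m : ℝ) := by
          have h1' : W.1 - X.1 = (m : ℝ) := hm.symm
          linarith
        have h2 : W.2 = X.2 := by
          have : W.2 - X.2 = 0 := h0
          linarith
        ext
        · simpa using h1
        · simpa using h2
    rw [e]
    exact (Int.isClosedEmbedding_coe_real.isClosed_range.prod isClosed_singleton).preimage
      (continuous_id.sub continuous_const)
  have hFcomp : IsCompact F := isCompact_Icc.prod isCompact_Icc
  -- reduction of arbitrary preimages to representatives in F
  have hred : ∀ (n : ℕ) (Y : ℝ × ℝ), Y.2 ∈ J →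
      (∃ m : ℤ, G^[n] Y = X + ((m : ℝ), (0:ℝ))) →
      ∃ Y' : ℝ × ℝ, Y' ∈ F ∩ (G^[n]) ⁻¹' S ∧ absDetIter2 G n Y' = absDetIter2 G n Y := by
    rintro n Y hY2 ⟨m, hm⟩
    set Y' : ℝ × ℝ := Y + (((-⌊Y.1⌋ : ℤ) : ℝ), (0:ℝ)) with hY'def
    refine ⟨Y', ⟨⟨?_, ?_⟩, ?_⟩, VBC.absDetIter2_translate hG hGper n _ Y⟩
    · have e1 : Y'.1 = Y.1 + ((-⌊Y.1⌋ : ℤ) : ℝ) := rfl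
      have hfl1 : ((⌊Y.1⌋ : ℤ) : ℝ) ≤ Y.1 := Int.floor_le Y.1
      have hfl2 : Y.1 < ((⌊Y.1⌋ : ℤ) : ℝ) + 1 := Int.lt_floor_add_one Y.1
      rw [e1, Set.mem_Icc]
      push_cast
      constructor
      · linarith
      · linarith
    · have e2 : Y'.2 = Y.2 + 0 := rfl
      rw [e2, add_zero]
      exact hY2
    · refine ⟨m - ⌊Y.1⌋ * k ^ n, ?_⟩
      rw [hY'def, VBC.iter_translate hGper n (-⌊Y.1⌋) Y, hm, add_assoc]
      congr 1
      simp only [Prod.mk_add_mk, Prod.mk.injEq]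
      constructor
      · push_cast; ring
      · ring
  -- positive lower bound on the determinant at each scale
  have key : ∀ n : ℕ, ∃ ε : ℝ, 0 < ε ∧ ∀ Y : ℝ × ℝ, Y.2 ∈ J →
      (∃ m : ℤ, G^[n] Y = X + ((m : ℝ), (0:ℝ))) → ε ≤ absDetIter2 G n Y := by
    intro n
    set Kn : Set (ℝ × ℝ) := F ∩ (G^[n]) ⁻¹' S with hKndef
    have hKncomp : IsCompact Kn :=
      hFcomp.inter_right (hScl.preimage (VBC.contDiff_iter hG n).continuous)
    rcases Kn.eq_empty_or_nonempty with hemp | hne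
    · refine ⟨1, one_pos, ?_⟩
      intro Y hY2 hm
      obtain ⟨Y', hY', -⟩ := hred n Y hY2 hm
      have hY'K : Y' ∈ Kn := hY'
      rw [hemp] at hY'K
      exact absurd hY'K (Set.notMem_empty _)
    · obtain ⟨Y₀, hY₀, hminY₀⟩ :=
        hKncomp.exists_isMinOn hne (VBC.continuous_absDetIter2 hG n).continuousOn
      refine ⟨absDetIter2 G n Y₀, ?_, ?_⟩
      · rcases lt_or_eq_of_le (VBC.absDetIter2_nonneg n Y₀) with h | h
        · exact h
        · exfalso
          apply hnotN
          obtain ⟨m, hm⟩ := hY₀.2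
          have hY₀Zer : Y₀ ∈ Zer n := by
            refine ⟨hY₀.1, ?_⟩
            have : |(fderiv ℝ (G^[n]) Y₀).det| = 0 := h.symm
            exact abs_eq_zero.mp this
          refine Set.mem_iUnion.mpr ⟨n, Set.mem_iUnion.mpr ⟨-m, ?_⟩⟩
          refine ⟨G^[n] Y₀, ⟨Y₀, hY₀Zer, rfl⟩, ?_⟩
          show G^[n] Y₀ + (((-m : ℤ) : ℝ), (0:ℝ)) = X
          rw [hm, add_assoc]
          have e : (((m : ℤ) : ℝ), (0:ℝ)) + (((-m : ℤ) : ℝ), (0:ℝ)) = (0 : ℝ × ℝ) := by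
            have : (((m : ℤ) : ℝ), (0:ℝ)) + (((-m : ℤ) : ℝ), (0:ℝ)) = ((0:ℝ), (0:ℝ)) := by
              simp only [Prod.mk_add_mk, Prod.mk.injEq]
              constructor
              · push_cast; ring
              · ring
            rw [this]; rfl
          rw [e, add_zero]
      · intro Y hY2 hm
        obtain ⟨Y', hY', hdet⟩ := hred n Y hY2 hm
        rw [← hdet]
        exact isMinOn_iff.mp hminY₀ Y' hY'
  choose eps heps using key
  -- assemble the constant
  set Q : Finset ℝ :=
    insert 1 ((Finset.range N).image (fun n => eps n * Real.exp (-(β * Real.sqrt n)))) with hQdef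
  have hQne : Q.Nonempty := ⟨1, Finset.mem_insert_self _ _⟩
  have hminQpos : 0 < Q.min' hQne := by
    rcases Finset.mem_insert.mp (Q.min'_mem hQne) with h | h
    · rw [h]; norm_num
    · obtain ⟨n, -, hn⟩ := Finset.mem_image.mp h
      rw [← hn]
      exact mul_pos (heps n).1 (Real.exp_pos _)
  have hminQle1 : Q.min' hQne ≤ 1 := Q.min'_le 1 (Finset.mem_insert_self _ _)
  refine ⟨Q.min' hQne / 2, by positivity, ?_⟩
  intro n hn Y hY2 hm
  by_cases hcase : n < N
  · have hmem : eps n * Real.exp (-(β * Real.sqrt n)) ∈ Q :=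
      Finset.mem_insert_of_mem (Finset.mem_image_of_mem _ (Finset.mem_range.mpr hcase))
    have h1 : Q.min' hQne / 2 < eps n * Real.exp (-(β * Real.sqrt n)) :=
      lt_of_lt_of_le (by linarith) (Q.min'_le _ hmem)
    have h2 : Q.min' hQne / 2 * Real.exp (β * Real.sqrt n) < eps n := by
      have h3 := mul_lt_mul_of_pos_right h1 (Real.exp_pos (β * Real.sqrt n))
      calc Q.min' hQne / 2 * Real.exp (β * Real.sqrt n)
          < eps n * Real.exp (-(β * Real.sqrt n)) * Real.exp (β * Real.sqrt n) := h3
        _ = eps n := by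
            rw [mul_assoc, ← Real.exp_add, neg_add_cancel, Real.exp_zero, mul_one]
    exact h2.trans_le ((heps n).2 Y hY2 hm)
  · push_neg at hcase
    have hXE : X ∉ E n := hN n hcase
    by_contra hcon
    push_neg at hcon
    apply hXE
    refine ⟨hXF, Y, hY2, hm, ?_⟩
    have hlt1 : Q.min' hQne / 2 < 1 := by linarith
    calc absDetIter2 G n Y ≤ Q.min' hQne / 2 * Real.exp (β * Real.sqrt n) := hcon
      _ ≤ 1 * Real.exp (β * Real.sqrt n) :=
          mul_le_mul_of_nonneg_right hlt1.le (Real.exp_pos _).le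
      _ = Real.exp (β * Real.sqrt n) := one_mul _
end
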